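/- arXiv:2503.14794 — 6 statements merged into one kernel-verified Lean document; each statement's English description precedes it below -/
import Mathlib

section
/- Let p, p′ ∈ 𝒫**(2n). If (pᵗ)_C ≤ ((p′)ᵗ)_C in the dominance order, then p′ ≤ p in the dominance order. -/
open Finset

/-- A partition of `N`: an antitone function `ℕ → ℕ` (the 0-indexed parts, padded with
zeros) supported on `{0, …, N-1}` whose parts sum to `N`. -/
def IsPartition (N : ℕ) (p : ℕ → ℕ) : Prop :=
  Antitone p ∧ (∀ i, N ≤ i → p i = 0) ∧ ∑ i ∈ Finset.range N, p i = N

/-- Dominance order: `Dominates p q` means `q ≤ p`, i.e. every partial sum of the parts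
of `q` is at most the corresponding partial sum of the parts of `p`. -/
def Dominates (p q : ℕ → ℕ) : Prop :=
  ∀ j, ∑ i ∈ Finset.range j, q i ≤ ∑ i ∈ Finset.range j, p i

/-- Multiplicity of the value `k` among the first `N` parts of `p`. -/
def mult (N : ℕ) (p : ℕ → ℕ) (k : ℕ) : ℕ :=
  ((Finset.range N).filter (fun i => p i = k)).card

/-- Multiplicity of the value `k` among the entries of a tuple of naturals. -/
def multN {n : ℕ} (v : Fin n → ℕ) (k : ℕ) : ℕ :=
  (Finset.univ.filter (fun i => v i = k)).card

/-- Euclidean norm of a tuple of naturals. -/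
noncomputable def enormN {n : ℕ} (v : Fin n → ℕ) : ℝ :=
  Real.sqrt (∑ i, ((v i : ℝ)) ^ 2)

/-- `IsPStar n p μ₀ μ` says that `p ∈ 𝒫*(2n)` with decomposition data `(μ₀; μ₁, μ₂, …)`:
`p` is a partition of `2n` whose multiset of parts is the union of the doubled partition
`[μ₁, μ₁, μ₂, μ₂, …]` and a single even part `2μ₀` (omitted if `μ₀ = 0`).  Equivalently,
for each `k ≥ 1` the multiplicity of `k` in `p` equals twice its multiplicity in `μ`, plus
one if `k = 2μ₀`. -/
def IsPStar (n : ℕ) (p : ℕ → ℕ) (μ₀ : ℕ) (μ : ℕ → ℕ) : Prop :=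
  IsPartition (2 * n) p ∧ Antitone μ ∧ (∀ i, n ≤ i → μ i = 0) ∧
  ∀ k, 1 ≤ k → mult (2 * n) p k = 2 * mult n μ k + (if k = 2 * μ₀ then 1 else 0)

/-- The transpose of a partition (with parts supported on `{0, …, N-1}`):
`(pᵗ)_j = #{i : p_i ≥ j+1}` (0-indexed). -/
def transposeP (N : ℕ) (p : ℕ → ℕ) (j : ℕ) : ℕ :=
  ((Finset.range N).filter (fun i => j + 1 ≤ p i)).card

/-- A partition (of `N`, with parts supported on `{0, …, N-1}`) is of type `C` if every odd
part occurs with even multiplicity. -/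
def TypeC (N : ℕ) (p : ℕ → ℕ) : Prop :=
  ∀ k, Odd k → Even (mult N p k)

/-- `IsCCollapse N p r` says that `r = p_C` is the C-collapse of `p`: the greatest element,
in the dominance order, of the set of type `C` partitions of `N` that are `≤ p`. -/
def IsCCollapse (N : ℕ) (p r : ℕ → ℕ) : Prop :=
  IsPartition N r ∧ TypeC N r ∧ Dominates p r ∧
    ∀ r', IsPartition N r' → TypeC N r' → Dominates p r' → Dominates r r'

/-! ### Auxiliary lemmas -/

lemma transposeP_eq_sum (N : ℕ) (v : ℕ → ℕ) (j : ℕ) :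
    transposeP N v j = ∑ i ∈ Finset.range N, (if j + 1 ≤ v i then 1 else 0) := by
  rw [transposeP, Finset.card_filter]

lemma sum_mult_mul (N K : ℕ) (v : ℕ → ℕ) (hv : ∀ i, i < N → v i < K) (F : ℕ → ℕ) :
    ∑ i ∈ Finset.range N, F (v i) = ∑ k ∈ Finset.range K, mult N v k * F k := by
  have h := Finset.sum_fiberwise_of_maps_to (g := v) (t := Finset.range K)
      (fun i hi => Finset.mem_range.2 (hv i (Finset.mem_range.1 hi))) (fun i => F (v i))
  rw [← h]
  refine Finset.sum_congr rfl fun k _ => ?_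
  calc ∑ i ∈ (Finset.range N).filter (fun i => v i = k), F (v i)
      = ∑ _i ∈ (Finset.range N).filter (fun i => v i = k), F k :=
        Finset.sum_congr rfl fun i hi => by rw [(Finset.mem_filter.1 hi).2]
    _ = mult N v k * F k := by rw [Finset.sum_const, smul_eq_mul, mult]

lemma sum_transpose (N t : ℕ) (v : ℕ → ℕ) :
    ∑ j ∈ Finset.range t, transposeP N v j = ∑ i ∈ Finset.range N, min (v i) t := by
  simp only [transposeP_eq_sum]
  rw [Finset.sum_comm]
  refine Finset.sum_congr rfl fun i _ => ?_
  rw [← Finset.card_filter]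
  have h : (Finset.range t).filter (fun j => j + 1 ≤ v i) = Finset.range (min (v i) t) := by
    ext x; simp only [Finset.mem_filter, Finset.mem_range]; omega
  rw [h, Finset.card_range]

lemma even_card_pairs (N : ℕ) (Q : ℕ → Prop) [DecidablePred Q]
    (h : ∀ i, Q (2*i) ↔ Q (2*i+1)) :
    Even (((Finset.range (2*N)).filter Q).card) := by
  induction N with
  | zero => simp
  | succ N ih =>
    have e : 2*(N+1) = (2*N+1)+1 := by ring
    rw [e, Finset.range_add_one, Finset.filter_insert, Finset.range_add_one, Finset.filter_insert]
    by_cases hQ : Q (2*N)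
    · have hQ2 : Q (2*N+1) := (h N).1 hQ
      rw [if_pos hQ2, if_pos hQ]
      rw [Finset.card_insert_of_notMem, Finset.card_insert_of_notMem]
      · obtain ⟨c, hc⟩ := ih; exact ⟨c+1, by omega⟩
      · intro hmem
        have := Finset.mem_range.1 (Finset.mem_filter.1 hmem).1; omega
      · intro hmem
        rcases Finset.mem_insert.1 hmem with h1 | h1
        · omega
        · have := Finset.mem_range.1 (Finset.mem_filter.1 h1).1; omega
    · have hQ2 : ¬ Q (2*N+1) := fun h2 => hQ ((h N).2 h2)
      rw [if_neg hQ2, if_neg hQ]; exact ih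

lemma fSgen (v w : ℕ → ℕ) (mm : ℕ) (hv : ∀ j, v j = 2 * w j + (if j < mm then 1 else 0)) (t : ℕ) :
    ∑ j ∈ Finset.range t, v j = 2 * (∑ j ∈ Finset.range t, w j) + min t mm := by
  have h1 : ∑ j ∈ Finset.range t, v j
      = ∑ j ∈ Finset.range t, (2 * w j + (if j < mm then 1 else 0)) :=
    Finset.sum_congr rfl fun j _ => hv j
  rw [h1, Finset.sum_add_distrib, ← Finset.mul_sum]
  congr 1
  rw [← Finset.card_filter]
  have h2 : (Finset.range t).filter (fun j => j < mm) = Finset.range (min t mm) := by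
    ext x; simp only [Finset.mem_filter, Finset.mem_range]; omega
  rw [h2, Finset.card_range]

lemma partition_part_le {N : ℕ} {v : ℕ → ℕ} (hv : IsPartition N v) {i : ℕ} (hi : i < N) :
    v i ≤ N := by
  have h := Finset.single_le_sum (f := v) (fun j _ => Nat.zero_le _) (Finset.mem_range.2 hi)
  rw [hv.2.2] at h
  exact h

lemma pstar_two_mu0_le {n : ℕ} {p : ℕ → ℕ} {μ₀ : ℕ} {μ : ℕ → ℕ} (hp : IsPStar n p μ₀ μ) :
    2 * μ₀ ≤ 2 * n := by
  rcases Nat.eq_zero_or_pos μ₀ with h | h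
  · omega
  · have hm := hp.2.2.2 (2*μ₀) (by omega)
    have hpos : 0 < mult (2*n) p (2*μ₀) := by rw [hm, if_pos rfl]; omega
    rw [mult] at hpos
    obtain ⟨i, hi⟩ := Finset.card_pos.1 hpos
    have h2 := Finset.mem_filter.1 hi
    have h3 := partition_part_le hp.1 (Finset.mem_range.1 h2.1)
    omega

lemma qval {n : ℕ} {p : ℕ → ℕ} {μ₀ : ℕ} {μ : ℕ → ℕ}
    (hp : IsPStar n p μ₀ μ) (hpss : μ 0 ≤ 2 * μ₀) (j : ℕ) :
    transposeP (2*n) p j = 2 * transposeP n μ j + (if j < 2*μ₀ then 1 else 0) := by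
  have hm2n := pstar_two_mu0_le hp
  obtain ⟨hp1, hμmono, hμsupp, hmult⟩ := hp
  have hpK : ∀ i, i < 2*n → p i < 2*n+1 := fun i hi =>
    Nat.lt_succ_of_le (partition_part_le hp1 hi)
  have hμK : ∀ i, i < n → μ i < 2*n+1 := fun i _ => by
    have h1 : μ i ≤ μ 0 := hμmono (Nat.zero_le i)
    omega
  have e1 : transposeP (2*n) p j
      = ∑ k ∈ Finset.range (2*n+1), mult (2*n) p k * (if j + 1 ≤ k then 1 else 0) := by
    rw [transposeP_eq_sum]
    exact sum_mult_mul (2*n) (2*n+1) p hpK (fun x => if j + 1 ≤ x then 1 else 0)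
  have e2 : transposeP n μ j
      = ∑ k ∈ Finset.range (2*n+1), mult n μ k * (if j + 1 ≤ k then 1 else 0) := by
    rw [transposeP_eq_sum]
    exact sum_mult_mul n (2*n+1) μ hμK (fun x => if j + 1 ≤ x then 1 else 0)
  rw [e1, e2]
  have hsplit : ∀ k ∈ Finset.range (2*n+1),
      mult (2*n) p k * (if j + 1 ≤ k then 1 else 0)
      = 2 * (mult n μ k * (if j + 1 ≤ k then 1 else 0))
        + (if k = 2*μ₀ then (if j + 1 ≤ k then 1 else 0) else 0) := by
    intro k _
    rcases Nat.eq_zero_or_pos k with rfl | hk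
    · simp
    · rw [hmult k hk]
      split_ifs <;> ring
  rw [Finset.sum_congr rfl hsplit, Finset.sum_add_distrib, ← Finset.mul_sum]
  rw [Finset.sum_ite_eq' (Finset.range (2*n+1)) (2*μ₀)
      (fun k => if j + 1 ≤ k then 1 else 0)]
  rw [if_pos (Finset.mem_range.2 (by omega))]
  rfl

lemma fa0 {n : ℕ} (w : ℕ → ℕ) (hw : Antitone w) (j : ℕ) (hj : w 0 ≤ j) :
    transposeP n w j = 0 := by
  rw [transposeP, Finset.card_eq_zero, Finset.filter_eq_empty_iff]
  intro i _
  have := hw (Nat.zero_le i)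
  omega

lemma transposeP_antitone (n : ℕ) (w : ℕ → ℕ) : Antitone (transposeP n w) := by
  intro x y hxy
  apply Finset.card_le_card
  intro i hi
  have h := Finset.mem_filter.1 hi
  exact Finset.mem_filter.2 ⟨h.1, by omega⟩

/-- The explicit type-`C` candidate dominated by `pᵗ`: adjacent pairing of the odd
columns `2μᵗ_j + 1`, `j < 2μ₀`, replacing each unequal pair `(x, y)` by `(x-1, y+1)`. -/
def Rhat (n μ₀ : ℕ) (μ : ℕ → ℕ) (j : ℕ) : ℕ :=
  if j < 2*μ₀ then
    (if transposeP n μ (2*(j/2)) = transposeP n μ (2*(j/2)+1) then 2 * transposeP n μ j + 1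
     else if j % 2 = 0 then 2 * transposeP n μ j else 2 * transposeP n μ j + 2)
  else 0

/-- Let `p, p′ ∈ 𝒫**(2n)`.  If `(pᵗ)_C ≤ ((p′)ᵗ)_C` in the dominance
order, then `p′ ≤ p` in the dominance order. -/
theorem statement10 (n : ℕ) (hn : 1 ≤ n)
    (p p' : ℕ → ℕ) (μ₀ μ₀' : ℕ) (μ μ' : ℕ → ℕ)
    (hp : IsPStar n p μ₀ μ) (hpss : μ 0 ≤ 2 * μ₀)
    (hp' : IsPStar n p' μ₀' μ') (hpss' : μ' 0 ≤ 2 * μ₀')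
    (r r' : ℕ → ℕ)
    (hr : IsCCollapse (2 * n) (transposeP (2 * n) p) r)
    (hr' : IsCCollapse (2 * n) (transposeP (2 * n) p') r')
    (hdom : Dominates r' r) :
    Dominates p p' := by
  have hm2n : 2*μ₀ ≤ 2*n := pstar_two_mu0_le hp
  have hm2n' : 2*μ₀' ≤ 2*n := pstar_two_mu0_le hp'
  have f1 : ∀ j, transposeP (2*n) p j = 2 * transposeP n μ j + (if j < 2*μ₀ then 1 else 0) :=
    qval hp hpss
  have f1' : ∀ j, transposeP (2*n) p' j = 2 * transposeP n μ' j + (if j < 2*μ₀' then 1 else 0) :=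
    qval hp' hpss'
  have ha0 : ∀ j, 2*μ₀ ≤ j → transposeP n μ j = 0 :=
    fun j hj => fa0 μ hp.2.1 j (le_trans hpss hj)
  have ha0' : ∀ j, 2*μ₀' ≤ j → transposeP n μ' j = 0 :=
    fun j hj => fa0 μ' hp'.2.1 j (le_trans hpss' hj)
  have ha_anti := transposeP_antitone n μ
  have hq0 : ∀ j, 2*μ₀ ≤ j → transposeP (2*n) p j = 0 := by
    intro j hj
    rw [f1 j, ha0 j hj, if_neg (show ¬ (j < 2*μ₀) by omega)]
  have hq_pos : ∀ j, j < 2*μ₀ → transposeP (2*n) p j = 2 * transposeP n μ j + 1 := by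
    intro j hj; rw [f1 j, if_pos hj]
  have hq0' : ∀ j, 2*μ₀' ≤ j → transposeP (2*n) p' j = 0 := by
    intro j hj
    rw [f1' j, ha0' j hj, if_neg (show ¬ (j < 2*μ₀') by omega)]
  -- basic facts about the candidate `R := Rhat n μ₀ μ`
  have hR0 : ∀ j, 2*μ₀ ≤ j → Rhat n μ₀ μ j = 0 := by
    intro j hj
    simp only [Rhat]
    rw [if_neg (show ¬ (j < 2*μ₀) by omega)]
  have hRe : ∀ i, 2*i < 2*μ₀ → Rhat n μ₀ μ (2*i) =
      (if transposeP n μ (2*i) = transposeP n μ (2*i+1) then 2 * transposeP n μ (2*i) + 1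
       else 2 * transposeP n μ (2*i)) := by
    intro i hi
    simp only [Rhat]
    have h1 : 2*i/2 = i := by omega
    have h2 : 2*i % 2 = 0 := by omega
    rw [if_pos hi, h1, h2]
    by_cases hk : transposeP n μ (2*i) = transposeP n μ (2*i+1)
    · rw [if_pos hk, if_pos hk]
    · rw [if_neg hk, if_neg hk]; simp
  have hRo : ∀ i, 2*i+1 < 2*μ₀ → Rhat n μ₀ μ (2*i+1) =
      (if transposeP n μ (2*i) = transposeP n μ (2*i+1) then 2 * transposeP n μ (2*i+1) + 1
       else 2 * transposeP n μ (2*i+1) + 2) := by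
    intro i hi
    simp only [Rhat]
    have h1 : (2*i+1)/2 = i := by omega
    have h2 : ¬ ((2*i+1) % 2 = 0) := by omega
    rw [if_pos hi, h1]
    by_cases hk : transposeP n μ (2*i) = transposeP n μ (2*i+1)
    · rw [if_pos hk, if_pos hk]
    · rw [if_neg hk, if_neg hk, if_neg h2]
  -- pair sums agree with those of q
  have hpairsum : ∀ i, Rhat n μ₀ μ (2*i) + Rhat n μ₀ μ (2*i+1)
      = transposeP (2*n) p (2*i) + transposeP (2*n) p (2*i+1) := by
    intro i
    by_cases hi : 2*i < 2*μ₀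
    · have hi2 : 2*i+1 < 2*μ₀ := by omega
      rw [hRe i hi, hRo i hi2, hq_pos _ hi, hq_pos _ hi2]
      by_cases hk : transposeP n μ (2*i) = transposeP n μ (2*i+1)
      · rw [if_pos hk, if_pos hk]
      · rw [if_neg hk, if_neg hk]; omega
    · rw [hR0 _ (by omega), hR0 _ (by omega), hq0 _ (by omega), hq0 _ (by omega)]
  have hRle : ∀ i, Rhat n μ₀ μ (2*i) ≤ transposeP (2*n) p (2*i)
      ∧ transposeP (2*n) p (2*i) ≤ Rhat n μ₀ μ (2*i) + 1 := by
    intro i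
    by_cases hi : 2*i < 2*μ₀
    · rw [hRe i hi, hq_pos _ hi]
      by_cases hk : transposeP n μ (2*i) = transposeP n μ (2*i+1)
      · rw [if_pos hk]; omega
      · rw [if_neg hk]; omega
    · rw [hR0 _ (by omega), hq0 _ (by omega)]; omega
  -- even partial sums agree
  have hSeven : ∀ i, ∑ j ∈ Finset.range (2*i), Rhat n μ₀ μ j
      = ∑ j ∈ Finset.range (2*i), transposeP (2*n) p j := by
    intro i
    induction i with
    | zero => simp
    | succ i ih =>
      have e : 2*(i+1) = 2*i+1+1 := by ring
      rw [e]
      have h1 := Finset.sum_range_succ (fun j => Rhat n μ₀ μ j) (2*i+1)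
      have h2 := Finset.sum_range_succ (fun j => Rhat n μ₀ μ j) (2*i)
      have h3 := Finset.sum_range_succ (fun j => transposeP (2*n) p j) (2*i+1)
      have h4 := Finset.sum_range_succ (fun j => transposeP (2*n) p j) (2*i)
      have h5 := hpairsum i
      omega
  have hSrle : ∀ t, (∑ j ∈ Finset.range t, Rhat n μ₀ μ j
        ≤ ∑ j ∈ Finset.range t, transposeP (2*n) p j)
      ∧ (∑ j ∈ Finset.range t, transposeP (2*n) p j
        ≤ ∑ j ∈ Finset.range t, Rhat n μ₀ μ j + 1) := by
    intro t
    rcases Nat.even_or_odd t with ⟨i, hi⟩ | ⟨i, hi⟩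
    · have e : t = 2*i := by omega
      subst e
      have := hSeven i
      omega
    · have e : t = 2*i+1 := by omega
      subst e
      have h1 := hSeven i
      have h2 := Finset.sum_range_succ (fun j => Rhat n μ₀ μ j) (2*i)
      have h3 := Finset.sum_range_succ (fun j => transposeP (2*n) p j) (2*i)
      have h4 := hRle i
      omega
  -- antitone
  have hR_anti : Antitone (Rhat n μ₀ μ) := by
    apply antitone_nat_of_succ_le
    intro j
    rcases Nat.even_or_odd j with ⟨i, hi⟩ | ⟨i, hi⟩
    · have e : j = 2*i := by omega
      subst e
      by_cases h1 : 2*i < 2*μ₀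
      · have h2 : 2*i+1 < 2*μ₀ := by omega
        rw [hRe i h1, hRo i h2]
        have hm1 : transposeP n μ (2*i+1) ≤ transposeP n μ (2*i) := ha_anti (by omega)
        by_cases hk : transposeP n μ (2*i) = transposeP n μ (2*i+1)
        · rw [if_pos hk, if_pos hk]; omega
        · rw [if_neg hk, if_neg hk]; omega
      · rw [hR0 (2*i+1) (by omega)]
        exact Nat.zero_le _
    · have e : j = 2*i+1 := by omega
      subst e
      rw [show 2*i+1+1 = 2*(i+1) by ring]
      by_cases h2 : 2*(i+1) < 2*μ₀
      · have h1 : 2*i+1 < 2*μ₀ := by omega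
        rw [hRe (i+1) h2, hRo i h1]
        have hm1 : transposeP n μ (2*(i+1)) ≤ transposeP n μ (2*i+1) := ha_anti (by omega)
        by_cases hk2 : transposeP n μ (2*(i+1)) = transposeP n μ (2*(i+1)+1)
        · rw [if_pos hk2]
          by_cases hk1 : transposeP n μ (2*i) = transposeP n μ (2*i+1)
          · rw [if_pos hk1]; omega
          · rw [if_neg hk1]; omega
        · rw [if_neg hk2]
          by_cases hk1 : transposeP n μ (2*i) = transposeP n μ (2*i+1)
          · rw [if_pos hk1]; omega
          · rw [if_neg hk1]; omega
      · rw [hR0 (2*(i+1)) (by omega)]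
        exact Nat.zero_le _
  -- support
  have hR_supp : ∀ i, 2*n ≤ i → Rhat n μ₀ μ i = 0 := fun i hi => hR0 i (by omega)
  -- total sum
  have hR_sum : ∑ j ∈ Finset.range (2*n), Rhat n μ₀ μ j = 2*n := by
    have h1 := hSeven n
    have h2 := sum_transpose (2*n) (2*n) p
    have h3 : ∑ i ∈ Finset.range (2*n), min (p i) (2*n) = ∑ i ∈ Finset.range (2*n), p i :=
      Finset.sum_congr rfl fun i hi2 =>
        min_eq_left (partition_part_le hp.1 (Finset.mem_range.1 hi2))
    have h4 := hp.1.2.2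
    omega
  -- type C
  have hR_typeC : TypeC (2*n) (Rhat n μ₀ μ) := by
    intro k hk
    obtain ⟨x, hx⟩ := hk
    have hpairs : ∀ i, (Rhat n μ₀ μ (2*i) = k) ↔ (Rhat n μ₀ μ (2*i+1) = k) := by
      intro i
      constructor
      · intro h
        by_cases h1 : 2*i < 2*μ₀
        · rw [hRe i h1] at h
          by_cases hk1 : transposeP n μ (2*i) = transposeP n μ (2*i+1)
          · rw [if_pos hk1] at h
            rw [hRo i (by omega), if_pos hk1]
            omega
          · rw [if_neg hk1] at h; omega
        · rw [hR0 _ (by omega)] at h; omega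
      · intro h
        by_cases h1 : 2*i+1 < 2*μ₀
        · rw [hRo i h1] at h
          by_cases hk1 : transposeP n μ (2*i) = transposeP n μ (2*i+1)
          · rw [if_pos hk1] at h
            rw [hRe i (by omega), if_pos hk1]
            omega
          · rw [if_neg hk1] at h; omega
        · rw [hR0 _ (by omega)] at h; omega
    rw [mult]
    exact even_card_pairs n _ hpairs
  -- the candidate is a type C partition dominated by pᵗ, hence dominated by r
  have hR_part : IsPartition (2*n) (Rhat n μ₀ μ) := ⟨hR_anti, hR_supp, hR_sum⟩
  have hdomR : Dominates (transposeP (2*n) p) (Rhat n μ₀ μ) := fun t => (hSrle t).1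
  have hrR : Dominates r (Rhat n μ₀ μ) := hr.2.2.2 _ hR_part hR_typeC hdomR
  -- chains
  have hchain : ∀ t, ∑ j ∈ Finset.range t, transposeP (2*n) p j
      ≤ ∑ j ∈ Finset.range t, transposeP (2*n) p' j + 1 := by
    intro t
    have h1 := (hSrle t).2
    have h2 := hrR t
    have h3 := hdom t
    have h4 := hr'.2.2.1 t
    omega
  have hcheven : ∀ i, ∑ j ∈ Finset.range (2*i), transposeP (2*n) p j
      ≤ ∑ j ∈ Finset.range (2*i), transposeP (2*n) p' j := by
    intro i
    have h1 := hSeven i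
    have h2 := hrR (2*i)
    have h3 := hdom (2*i)
    have h4 := hr'.2.2.1 (2*i)
    omega
  have hchodd : ∀ i, 2*μ₀ ≤ 2*i → ∑ j ∈ Finset.range (2*i+1), transposeP (2*n) p j
      ≤ ∑ j ∈ Finset.range (2*i+1), transposeP (2*n) p' j := by
    intro i hge
    have h1 := hSeven i
    have hsR := Finset.sum_range_succ (fun j => Rhat n μ₀ μ j) (2*i)
    have hsq := Finset.sum_range_succ (fun j => transposeP (2*n) p j) (2*i)
    have hRv := hR0 (2*i) hge
    have hqv := hq0 (2*i) hge
    have h2 := hrR (2*i+1)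
    have h3 := hdom (2*i+1)
    have h4 := hr'.2.2.1 (2*i+1)
    omega
  -- MAIN: S_q(t) ≤ S_{q'}(t) for all t
  have hMAIN : ∀ t, ∑ j ∈ Finset.range t, transposeP (2*n) p j
      ≤ ∑ j ∈ Finset.range t, transposeP (2*n) p' j := by
    intro t
    rcases Nat.even_or_odd t with ⟨i, hi⟩ | ⟨i, hi⟩
    · have e : t = 2*i := by omega
      subst e
      exact hcheven i
    · have e : t = 2*i+1 := by omega
      subst e
      by_contra hcon
      push_neg at hcon
      have heq : ∑ j ∈ Finset.range (2*i+1), transposeP (2*n) p j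
          = ∑ j ∈ Finset.range (2*i+1), transposeP (2*n) p' j + 1 := by
        have := hchain (2*i+1); omega
      have hfq := fSgen (transposeP (2*n) p) (transposeP n μ) (2*μ₀) f1 (2*i+1)
      have hfq' := fSgen (transposeP (2*n) p') (transposeP n μ') (2*μ₀') f1' (2*i+1)
      by_cases hcase : 2*i+1 < 2*μ₀
      · -- t < m: then 2μ₀' ≤ t, and the step to t+1 gives a contradiction
        have hm'le : 2*μ₀' ≤ 2*i+1 := by omega
        have h2 := hcheven (i+1)
        rw [show 2*(i+1) = 2*i+1+1 by ring] at h2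
        have hsq := Finset.sum_range_succ (fun j => transposeP (2*n) p j) (2*i+1)
        have hsq' := Finset.sum_range_succ (fun j => transposeP (2*n) p' j) (2*i+1)
        have hqv := hq_pos (2*i+1) hcase
        have hq'v := hq0' (2*i+1) hm'le
        omega
      · -- t ≥ m: the chain has no defect at t
        have := hchodd i (by omega)
        omega
  -- transfer back: Dominates p p'
  intro k
  by_cases hk : k ≤ 2*n
  · have hc : ∀ i, i < k → p k ≤ p i := fun i hi => hp.1.1 (by omega : i ≤ k)
    have h1 : ∑ i ∈ Finset.range k, p' i
        ≤ k * p k + ∑ i ∈ Finset.range k, (p' i - p k) := by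
      have hle : ∀ i ∈ Finset.range k, p' i ≤ p k + (p' i - p k) := fun i _ => by omega
      have h2 := Finset.sum_le_sum hle
      have h3 : ∑ i ∈ Finset.range k, (p k + (p' i - p k))
          = k * p k + ∑ i ∈ Finset.range k, (p' i - p k) := by
        rw [Finset.sum_add_distrib, Finset.sum_const, Finset.card_range, smul_eq_mul]
      omega
    have h2 : ∑ i ∈ Finset.range k, (p' i - p k) ≤ ∑ i ∈ Finset.range (2*n), (p' i - p k) :=
      Finset.sum_le_sum_of_subset (Finset.range_subset_range.2 (by omega))
    have h3 : ∑ i ∈ Finset.range (2*n), (p' i - p k)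
        ≤ ∑ i ∈ Finset.range (2*n), (p i - p k) := by
      have ha := sum_transpose (2*n) (p k) p
      have hb := sum_transpose (2*n) (p k) p'
      have hta : ∑ i ∈ Finset.range (2*n), (min (p i) (p k) + (p i - p k)) = 2*n := by
        have hco : ∀ i ∈ Finset.range (2*n), min (p i) (p k) + (p i - p k) = p i :=
          fun i _ => by omega
        rw [Finset.sum_congr rfl hco, hp.1.2.2]
      have htb : ∑ i ∈ Finset.range (2*n), (min (p' i) (p k) + (p' i - p k)) = 2*n := by
        have hco : ∀ i ∈ Finset.range (2*n), min (p' i) (p k) + (p' i - p k) = p' i :=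
          fun i _ => by omega
        rw [Finset.sum_congr rfl hco, hp'.1.2.2]
      have hsa : ∑ i ∈ Finset.range (2*n), (min (p i) (p k) + (p i - p k))
          = ∑ i ∈ Finset.range (2*n), min (p i) (p k)
            + ∑ i ∈ Finset.range (2*n), (p i - p k) := Finset.sum_add_distrib
      have hsb : ∑ i ∈ Finset.range (2*n), (min (p' i) (p k) + (p' i - p k))
          = ∑ i ∈ Finset.range (2*n), min (p' i) (p k)
            + ∑ i ∈ Finset.range (2*n), (p' i - p k) := Finset.sum_add_distrib
      have hm := hMAIN (p k)
      omega
    have h4 : ∑ i ∈ Finset.range (2*n), (p i - p k) = ∑ i ∈ Finset.range k, (p i - p k) := by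
      refine (Finset.sum_subset (Finset.range_subset_range.2 (by omega)) ?_).symm
      intro i _ hni
      have hik : k ≤ i := by
        by_contra hcon
        exact hni (Finset.mem_range.2 (by omega))
      have := hp.1.1 hik
      omega
    have h5 : k * p k + ∑ i ∈ Finset.range k, (p i - p k) = ∑ i ∈ Finset.range k, p i := by
      have h6 : ∑ i ∈ Finset.range k, (p k + (p i - p k)) = ∑ i ∈ Finset.range k, p i :=
        Finset.sum_congr rfl fun i hi => by
          have := hc i (Finset.mem_range.1 hi); omega
      have h7 : ∑ i ∈ Finset.range k, (p k + (p i - p k))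
          = k * p k + ∑ i ∈ Finset.range k, (p i - p k) := by
        rw [Finset.sum_add_distrib, Finset.sum_const, Finset.card_range, smul_eq_mul]
      omega
    omega
  · have h1 : ∑ i ∈ Finset.range k, p' i = ∑ i ∈ Finset.range (2*n), p' i := by
      refine (Finset.sum_subset (Finset.range_subset_range.2 (by omega)) ?_).symm
      intro i _ hni
      refine hp'.1.2.1 i ?_
      by_contra hcon
      exact hni (Finset.mem_range.2 (by omega))
    have h2 : ∑ i ∈ Finset.range k, p i = ∑ i ∈ Finset.range (2*n), p i := by
      refine (Finset.sum_subset (Finset.range_subset_range.2 (by omega)) ?_).symm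
      intro i _ hni
      refine hp.1.2.1 i ?_
      by_contra hcon
      exact hni (Finset.mem_range.2 (by omega))
    rw [h1, h2, hp.1.2.2, hp'.1.2.2]
end

section
/- For every ε ∈ (−1/2, 1/2) and every v ∈ (ε+ℤ)ⁿ₊, one has |v_ε(p_ε(v))| ≤ |v|; that is, among weakly decreasing n-tuples in ε+ℤ with a given multiset of multiplicities, the ε-triangular arrangement has minimal Euclidean norm. -/
open Finset

/-- Multiplicity of the real value `s` among the entries of the tuple `v`. -/
noncomputable def multR {n : ℕ} (v : Fin n → ℝ) (s : ℝ) : ℕ :=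
  {i : Fin n | v i = s}.ncard

/-- Euclidean norm of a real tuple. -/
noncomputable def enormR {n : ℕ} (v : Fin n → ℝ) : ℝ :=
  Real.sqrt (∑ i, (v i) ^ 2)

/-- `IsVEps n ε p w` says that the weakly decreasing tuple `w : Fin n → ℝ` is `v_ε(p)`:
its entries lie in `ε + ℤ`, `ε` occurs with multiplicity `p 0 = μ₀`, and for `k ≥ 1`
(writing the parts of `p` as `[μ₀, μ₁, μ₁', μ₂, μ₂', …]`, so `μ_k = p (2k-1)` and
`μ_k' = p (2k)`), if `ε ≥ 0` then `ε - k` occurs `μ_k` times and `ε + k` occurs `μ_k'`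
times, while if `ε < 0` then `ε + k` occurs `μ_k` times and `ε - k` occurs `μ_k'` times. -/
def IsVEps (n : ℕ) (ε : ℝ) (p : ℕ → ℕ) (w : Fin n → ℝ) : Prop :=
  Antitone w ∧ (∀ i, ∃ k : ℤ, w i = ε + (k : ℝ)) ∧
  multR w ε = p 0 ∧
  ∀ k : ℕ, 1 ≤ k →
    ((0 ≤ ε → multR w (ε - (k : ℝ)) = p (2 * k - 1) ∧ multR w (ε + (k : ℝ)) = p (2 * k)) ∧
     (ε < 0 → multR w (ε + (k : ℝ)) = p (2 * k - 1) ∧ multR w (ε - (k : ℝ)) = p (2 * k)))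

/-- `IsPEps n ε v q` says that the partition `q` of `n` is `p_ε(v)`: the weakly decreasing
rearrangement of the multiplicity sequence `[m_v(ε), m_v(ε-1), m_v(ε+1), …]`, i.e. for each
positive value `c`, the number of parts of `q` equal to `c` is the number of `k : ℤ` with
`m_v(ε + k) = c`. -/
def IsPEps (n : ℕ) (ε : ℝ) (v : Fin n → ℝ) (q : ℕ → ℕ) : Prop :=
  IsPartition n q ∧
  ∀ c : ℕ, 1 ≤ c → mult n q c = {k : ℤ | multR v (ε + (k : ℝ)) = c}.ncard

/-! ### Auxiliary machinery -/

/-- Enumeration of `ℤ` as `0, -1, 1, -2, 2, …`. -/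
def gg : ℕ → ℤ := fun j => if Even j then ((j / 2 : ℕ) : ℤ) else -(((j+1)/2 : ℕ) : ℤ)

lemma gg_even (k : ℕ) : gg (2 * k) = k := by simp [gg, even_two_mul]

lemma gg_odd' (k : ℕ) : gg (2 * k + 1) = -(k + 1 : ℕ) := by
  have h : ¬ Even (2 * k + 1) := by simp [parity_simps]
  have h2 : (2 * k + 1 + 1) / 2 = k + 1 := by omega
  simp only [gg, h, if_false, h2]

lemma gg_odd (k : ℕ) (hk : 1 ≤ k) : gg (2 * k - 1) = -k := by
  obtain ⟨j, rfl⟩ : ∃ j, k = j + 1 := ⟨k - 1, by omega⟩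
  have h : 2 * (j + 1) - 1 = 2 * j + 1 := by omega
  rw [h, gg_odd']

lemma gg_inj : Function.Injective gg := by
  intro a b hab
  rcases Nat.even_or_odd a with ⟨x, hx⟩ | ⟨x, hx⟩ <;>
    rcases Nat.even_or_odd b with ⟨y, hy⟩ | ⟨y, hy⟩ <;>
    [skip; skip; skip; skip] <;>
    (first
      | (have hx' : a = 2 * x := by omega
         have hy' : b = 2 * y := by omega
         rw [hx', hy', gg_even, gg_even] at hab; omega)
      | (have hx' : a = 2 * x := by omega
         have hy' : b = 2 * y + 1 := by omega
         rw [hx', hy', gg_even, gg_odd'] at hab; omega)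
      | (have hx' : a = 2 * x + 1 := by omega
         have hy' : b = 2 * y := by omega
         rw [hx', hy', gg_odd', gg_even] at hab; omega)
      | (have hx' : a = 2 * x + 1 := by omega
         have hy' : b = 2 * y + 1 := by omega
         rw [hx', hy', gg_odd', gg_odd'] at hab; omega))

lemma gg_surj : Function.Surjective gg := by
  intro z
  rcases le_or_gt 0 z with h | h
  · exact ⟨2 * z.toNat, by rw [gg_even]; omega⟩
  · refine ⟨2 * (-z).toNat - 1, ?_⟩
    rw [gg_odd _ (by omega)]; omega

/-- The `ε`-triangular enumeration of `ℤ`, by increasing distance from `ε`. -/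
noncomputable def ff (ε : ℝ) : ℕ → ℤ := fun j => if 0 ≤ ε then gg j else -gg j

lemma ff_inj (ε : ℝ) : Function.Injective (ff ε) := by
  intro a b hab
  unfold ff at hab
  split at hab
  · exact gg_inj hab
  · exact gg_inj (neg_injective hab)

lemma ff_surj (ε : ℝ) : Function.Surjective (ff ε) := by
  intro z
  unfold ff
  split
  · exact gg_surj z
  · obtain ⟨j, hj⟩ := gg_surj (-z)
    exact ⟨j, by rw [hj]; ring⟩

lemma cost_mono (ε : ℝ) (hε₁ : -(1 / 2 : ℝ) < ε) (hε₂ : ε < 1 / 2) :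
    Monotone (fun j => (ε + (ff ε j : ℝ)) ^ 2) := by
  apply monotone_nat_of_le_succ
  intro j
  rcases Nat.even_or_odd j with ⟨k, hk⟩ | ⟨k, hk⟩
  · have hj : j = 2 * k := by omega
    subst hj
    have e1 : gg (2 * k) = (k : ℤ) := gg_even k
    have e2 : gg (2 * k + 1) = -((k : ℤ) + 1) := by rw [gg_odd']; push_cast; ring
    rcases le_or_gt 0 ε with h | h
    · simp only [ff, if_pos h, e1, e2]; push_cast; nlinarith [Nat.cast_nonneg (α := ℝ) k]
    · simp only [ff, if_neg (not_le.mpr h), e1, e2]; push_cast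
      nlinarith [Nat.cast_nonneg (α := ℝ) k]
  · have hj : j = 2 * k + 1 := by omega
    subst hj
    have e1 : gg (2 * k + 1) = -((k : ℤ) + 1) := by rw [gg_odd']; push_cast; ring
    have e2 : gg (2 * k + 1 + 1) = (k : ℤ) + 1 := by
      have h : 2 * k + 1 + 1 = 2 * (k + 1) := by ring
      rw [h, gg_even]; push_cast; ring
    rcases le_or_gt 0 ε with h | h
    · simp only [ff, if_pos h, e1, e2]; push_cast; nlinarith [Nat.cast_nonneg (α := ℝ) k]
    · simp only [ff, if_neg (not_le.mpr h), e1, e2]; push_cast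
      nlinarith [Nat.cast_nonneg (α := ℝ) k]

lemma multR_eq_card {n : ℕ} (v : Fin n → ℝ) (s : ℝ) :
    multR v s = (Finset.univ.filter (fun i => v i = s)).card := by
  rw [multR]
  have h : {i : Fin n | v i = s} = ↑(Finset.univ.filter (fun i => v i = s)) := by
    ext i; simp
  rw [h, Set.ncard_coe_finset]

lemma multR_le {n : ℕ} (v : Fin n → ℝ) (s : ℝ) : multR v s ≤ n := by
  rw [multR_eq_card]
  exact le_trans (Finset.card_le_card (Finset.filter_subset _ _)) (by simp)

/-- Group a sum of squares by the (injectively enumerated) values. -/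
lemma sum_sq_group {n : ℕ} (ε : ℝ) (f : ℕ → ℤ) (hf : Function.Injective f)
    (u : Fin n → ℝ) (idx : Fin n → ℕ) (hidx : ∀ i, u i = ε + (f (idx i) : ℝ))
    (M : ℕ) (hM : ∀ i, idx i < M) :
    ∑ i, (u i) ^ 2 = ∑ j ∈ range M, (multR u (ε + (f j : ℝ)) : ℝ) * (ε + (f j : ℝ)) ^ 2 := by
  have hmaps : ∀ i ∈ Finset.univ, idx i ∈ range M := fun i _ => Finset.mem_range.mpr (hM i)
  rw [← Finset.sum_fiberwise_of_maps_to hmaps (fun i => (u i) ^ 2)]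
  refine Finset.sum_congr rfl fun j _ => ?_
  have hfib : Finset.univ.filter (fun i => idx i = j)
      = Finset.univ.filter (fun i => u i = ε + (f j : ℝ)) := by
    ext i
    simp only [Finset.mem_filter, Finset.mem_univ, true_and]
    constructor
    · rintro rfl; exact hidx i
    · intro h
      have h2 : (f (idx i) : ℝ) = (f j : ℝ) := by
        have := hidx i; linarith [h, this]
      exact hf (by exact_mod_cast h2)
  have hsum : ∑ i ∈ Finset.univ.filter (fun i => u i = ε + (f j : ℝ)), (u i)^2
      = ∑ _i ∈ Finset.univ.filter (fun i => u i = ε + (f j : ℝ)), (ε + (f j : ℝ))^2 :=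
    Finset.sum_congr rfl fun i hi => by rw [(Finset.mem_filter.mp hi).2]
  rw [hfib, multR_eq_card, hsum, Finset.sum_const, nsmul_eq_mul]

/-- Values whose index is out of range do not occur. -/
lemma multR_eq_zero {n : ℕ} (ε : ℝ) (f : ℕ → ℤ) (hf : Function.Injective f)
    (u : Fin n → ℝ) (idx : Fin n → ℕ) (hidx : ∀ i, u i = ε + (f (idx i) : ℝ))
    (M : ℕ) (hM : ∀ i, idx i < M) (j : ℕ) (hj : M ≤ j) :
    multR u (ε + (f j : ℝ)) = 0 := by
  rw [multR_eq_card, Finset.card_eq_zero, Finset.filter_eq_empty_iff]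
  intro i _ h
  have h2 : (f (idx i) : ℝ) = (f j : ℝ) := by have := hidx i; linarith
  have h3 := hf (by exact_mod_cast h2 : f (idx i) = f j)
  have := hM i; omega

/-- A downward-closed finset of naturals is an initial segment. -/
lemma lowerset_eq_range (S : Finset ℕ) (h : ∀ a ∈ S, ∀ b, b ≤ a → b ∈ S) :
    S = Finset.range S.card := by
  ext j
  simp only [Finset.mem_range]
  constructor
  · intro hj
    have hsub : Finset.range (j + 1) ⊆ S := fun b hb =>
      h j hj b (Nat.lt_succ_iff.mp (Finset.mem_range.mp hb))
    have := Finset.card_le_card hsub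
    simpa using this
  · intro hj
    by_contra hjS
    have hsub : S ⊆ Finset.range j := by
      intro a ha
      rw [Finset.mem_range]
      by_contra hja
      exact hjS (h a ha j (by omega))
    have := Finset.card_le_card hsub
    simp at this; omega

/-- For a monotone cost, the sum over the initial segment of size `#B` is at most the
sum over `B`. -/
lemma sum_range_le_sum_of_monotone (c : ℕ → ℝ) (hc : Monotone c)
    (B : Finset ℕ) : ∑ j ∈ Finset.range B.card, c j ≤ ∑ j ∈ B, c j := by
  set N := B.card with hN
  set e := B.orderEmbOfFin hN.symm with he
  have hsm : StrictMono (fun i : Fin N => (e i : ℕ)) := fun a b hab => e.strictMono hab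
  have hle : ∀ i : Fin N, (i : ℕ) ≤ e i := by
    rintro ⟨iv, hiv⟩
    induction iv with
    | zero => exact Nat.zero_le _
    | succ m ih =>
      have hm : m < N := by omega
      have h1 := ih hm
      have h2 : (e ⟨m, hm⟩ : ℕ) < e ⟨m+1, hiv⟩ := hsm (by simp [Fin.lt_def])
      simp only [Fin.val_mk] at h1 h2 ⊢
      omega
  have himg : ∑ j ∈ B, c j = ∑ i : Fin N, c (e i) := by
    refine (Finset.sum_bij (fun (i : Fin N) _ => (e i : ℕ)) ?_ ?_ ?_ ?_).symm
    · intro i _; exact Finset.orderEmbOfFin_mem B hN.symm i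
    · intro a _ b _ hab; exact e.injective hab
    · intro b hb
      have hbr : b ∈ Set.range e := by rw [he, Finset.range_orderEmbOfFin]; exact hb
      obtain ⟨i, hi⟩ := hbr
      exact ⟨i, Finset.mem_univ i, hi⟩
    · intro i _; rfl
  rw [himg, Finset.sum_range fun i => c i]
  exact Finset.sum_le_sum fun i _ => hc (hle i)

lemma layer_cake (a : ℕ → ℕ) (c : ℕ → ℝ) (M C : ℕ) (haC : ∀ j, a j ≤ C) :
    ∑ j ∈ range M, (a j : ℝ) * c j
      = ∑ t ∈ Icc 1 C, ∑ j ∈ (range M).filter (fun j => t ≤ a j), c j := by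
  have h1 : ∀ j, (a j : ℝ) * c j = ∑ t ∈ Icc 1 C, if t ≤ a j then c j else 0 := by
    intro j
    rw [← Finset.sum_filter]
    have h : (Icc 1 C).filter (fun t => t ≤ a j) = Icc 1 (a j) := by
      ext t; simp only [Finset.mem_filter, Finset.mem_Icc]
      have := haC j; omega
    rw [h, Finset.sum_const, Nat.card_Icc]
    simp [nsmul_eq_mul]
  calc ∑ j ∈ range M, (a j : ℝ) * c j
      = ∑ j ∈ range M, ∑ t ∈ Icc 1 C, (if t ≤ a j then c j else 0) :=
        Finset.sum_congr rfl fun j _ => h1 j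
    _ = ∑ t ∈ Icc 1 C, ∑ j ∈ range M, (if t ≤ a j then c j else 0) := Finset.sum_comm
    _ = ∑ t ∈ Icc 1 C, ∑ j ∈ (range M).filter (fun j => t ≤ a j), c j :=
        Finset.sum_congr rfl fun t _ => (Finset.sum_filter _ _).symm

/-- Rearrangement-type inequality: if `a` is antitone and has, level by level, the same
threshold counts as `b` on `range M`, then pairing `a` with the monotone cost `c` is
minimal. -/
lemma key_ineq (a b : ℕ → ℕ) (c : ℕ → ℝ) (M C : ℕ)
    (hcmono : Monotone c)
    (haC : ∀ j, a j ≤ C) (hbC : ∀ j, b j ≤ C)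
    (hanti : Antitone a)
    (hcount : ∀ t, 1 ≤ t →
      ((range M).filter (fun j => t ≤ a j)).card
        = ((range M).filter (fun j => t ≤ b j)).card) :
    ∑ j ∈ range M, (a j : ℝ) * c j ≤ ∑ j ∈ range M, (b j : ℝ) * c j := by
  rw [layer_cake a c M C haC, layer_cake b c M C hbC]
  refine Finset.sum_le_sum fun t ht => ?_
  set A := (range M).filter (fun j => t ≤ a j) with hA
  set B := (range M).filter (fun j => t ≤ b j) with hB
  have hAlow : ∀ x ∈ A, ∀ y, y ≤ x → y ∈ A := by
    intro x hx y hxy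
    simp only [hA, Finset.mem_filter, Finset.mem_range] at hx ⊢
    exact ⟨by omega, le_trans hx.2 (hanti hxy)⟩
  have hAB : A = range B.card := by
    rw [lowerset_eq_range A hAlow, hcount t (Finset.mem_Icc.mp ht).1]
  rw [hAB]
  exact sum_range_le_sum_of_monotone c hcmono B

/-- Threshold counts from value counts. -/
lemma threshold_count (a : ℕ → ℕ) (M C t : ℕ) (haC : ∀ j, a j ≤ C) :
    ((range M).filter (fun j => t ≤ a j)).card
      = ∑ c ∈ Icc t C, ((range M).filter (fun j => a j = c)).card := by
  rw [Finset.card_eq_sum_card_fiberwise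
    (fun j hj => Finset.mem_Icc.mpr ⟨(Finset.mem_filter.mp hj).2, haC j⟩)]
  refine Finset.sum_congr rfl fun c hc => ?_
  congr 1
  ext j
  simp only [Finset.mem_filter, Finset.mem_range]
  constructor
  · rintro ⟨⟨h1, _⟩, h2⟩; exact ⟨h1, h2⟩
  · rintro ⟨h1, h2⟩
    exact ⟨⟨h1, by subst h2; exact (Finset.mem_Icc.mp hc).1⟩, h2⟩

/-- For every `ε ∈ (−1/2, 1/2)` and every `v ∈ (ε+ℤ)ⁿ₊`, one has
`|v_ε(p_ε(v))| ≤ |v|`: the `ε`-triangular arrangement with the same multiset of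
multiplicities has minimal Euclidean norm. -/
theorem statement11 (n : ℕ) (hn : 1 ≤ n) (ε : ℝ)
    (hε₁ : -(1 / 2 : ℝ) < ε) (hε₂ : ε < 1 / 2)
    (v : Fin n → ℝ)
    (hv : Antitone v) (hvmem : ∀ i, ∃ k : ℤ, v i = ε + (k : ℝ))
    (q : ℕ → ℕ) (hq : IsPEps n ε v q)
    (w : Fin n → ℝ) (hw : IsVEps n ε q w) :
    enormR w ≤ enormR v := by
  obtain ⟨⟨hqanti, hqzero, hqsum⟩, hqmult⟩ := hq
  obtain ⟨hwanti, hwmem, hw0, hwk⟩ := hw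
  set f : ℕ → ℤ := ff ε with hf
  have hfi : Function.Injective f := ff_inj ε
  have hfs : Function.Surjective f := ff_surj ε
  set e : ℕ ≃ ℤ := Equiv.ofBijective f ⟨hfi, hfs⟩ with he
  have hef : ∀ j, e j = f j := fun j => rfl
  -- index functions
  have hidxv : ∀ i, v i = ε + (f (e.symm (Classical.choose (hvmem i))) : ℝ) := by
    intro i
    have h1 := Classical.choose_spec (hvmem i)
    have h2 : f (e.symm (Classical.choose (hvmem i))) = Classical.choose (hvmem i) := by
      rw [← hef, Equiv.apply_symm_apply]
    rw [h2]; exact h1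
  set idxv : Fin n → ℕ := fun i => e.symm (Classical.choose (hvmem i)) with hidxvdef
  have hidxw : ∀ i, w i = ε + (f (e.symm (Classical.choose (hwmem i))) : ℝ) := by
    intro i
    have h1 := Classical.choose_spec (hwmem i)
    have h2 : f (e.symm (Classical.choose (hwmem i))) = Classical.choose (hwmem i) := by
      rw [← hef, Equiv.apply_symm_apply]
    rw [h2]; exact h1
  set idxw : Fin n → ℕ := fun i => e.symm (Classical.choose (hwmem i)) with hidxwdef
  -- bound for v's indices
  set M : ℕ := max n ((Finset.univ.sup idxv) + 1) with hM
  have hnM : n ≤ M := le_max_left _ _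
  have hMv : ∀ i, idxv i < M := by
    intro i
    have h1 : idxv i ≤ Finset.univ.sup idxv := Finset.le_sup (Finset.mem_univ i)
    have h2 : Finset.univ.sup idxv + 1 ≤ M := le_max_right _ _
    omega
  -- multiplicities of w are given by q
  have hf0 : (f 0 : ℝ) = 0 := by
    have hg : gg 0 = 0 := by simp [gg]
    simp only [hf, ff]
    split <;> simp [hg]
  have hwq : ∀ j, multR w (ε + (f j : ℝ)) = q j := by
    intro j
    rcases Nat.eq_zero_or_pos j with rfl | hj
    · rw [hf0, add_zero, hw0]
    rcases Nat.even_or_odd j with ⟨k, hk⟩ | ⟨k, hk⟩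
    · -- j = 2k, k ≥ 1
      have hk1 : 1 ≤ k := by omega
      have hj2 : j = 2 * k := by omega
      subst hj2
      rcases le_or_gt 0 ε with h | h
      · have hfv : (f (2 * k) : ℝ) = (k : ℝ) := by
          simp only [hf, ff, if_pos h, gg_even]
          norm_cast
        rw [hfv]
        exact ((hwk k hk1).1 h).2
      · have hfv : (f (2 * k) : ℝ) = -(k : ℝ) := by
          simp only [hf, ff, if_neg (not_le.mpr h), gg_even]
          push_cast; ring
        rw [hfv, ← sub_eq_add_neg]
        exact ((hwk k hk1).2 h).2
    · -- j = 2k+1 = 2(k+1)-1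
      have hj2 : j = 2 * (k + 1) - 1 := by omega
      subst hj2
      have hgg : gg (2 * (k + 1) - 1) = -((k : ℤ) + 1) := by
        rw [gg_odd (k + 1) (by omega)]; push_cast; ring
      rcases le_or_gt 0 ε with h | h
      · have hfv : (f (2 * (k + 1) - 1) : ℝ) = -(((k + 1 : ℕ) : ℝ)) := by
          simp only [hf, ff, if_pos h, hgg]; push_cast; ring
        rw [hfv, ← sub_eq_add_neg]
        exact ((hwk (k + 1) (by omega)).1 h).1
      · have hfv : (f (2 * (k + 1) - 1) : ℝ) = ((k + 1 : ℕ) : ℝ) := by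
          simp only [hf, ff, if_neg (not_le.mpr h), hgg]; push_cast; ring
        rw [hfv]
        exact ((hwk (k + 1) (by omega)).2 h).1
  -- w's indices lie below n
  have hMw : ∀ i, idxw i < n := by
    intro i
    by_contra hcon
    push_neg at hcon
    have hz : q (idxw i) = 0 := hqzero _ hcon
    have h1 : 1 ≤ multR w (ε + (f (idxw i) : ℝ)) := by
      rw [multR_eq_card]
      refine Finset.card_pos.mpr ⟨i, ?_⟩
      simp only [Finset.mem_filter, Finset.mem_univ, true_and]
      exact hidxw i
    rw [hwq] at h1
    omega
  -- bounds on part sizes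
  have hq0n : ∀ j, q j ≤ n := by
    intro j
    have h1 : q j ≤ q 0 := hqanti (Nat.zero_le j)
    have h2 : q 0 ≤ ∑ i ∈ range n, q i :=
      Finset.single_le_sum (fun i _ => Nat.zero_le _) (Finset.mem_range.mpr (by omega))
    omega
  set m : ℕ → ℕ := fun j => multR v (ε + (f j : ℝ)) with hm
  have hmn : ∀ j, m j ≤ n := fun j => multR_le v _
  have hmz : ∀ j, M ≤ j → m j = 0 := fun j hj =>
    multR_eq_zero ε f hfi v idxv hidxv M hMv j hj
  -- value counts agree on range M
  have hvalcount : ∀ c, 1 ≤ c →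
      ((range M).filter (fun j => q j = c)).card = ((range M).filter (fun j => m j = c)).card := by
    intro c hc
    have h1 : mult n q c = ((range M).filter (fun j => q j = c)).card := by
      rw [mult]
      congr 1
      ext j
      simp only [Finset.mem_filter, Finset.mem_range]
      constructor
      · rintro ⟨h1, h2⟩; exact ⟨by omega, h2⟩
      · rintro ⟨h1, h2⟩
        refine ⟨?_, h2⟩
        by_contra hcon
        push_neg at hcon
        have := hqzero j hcon
        omega
    have h2 : {k : ℤ | multR v (ε + (k : ℝ)) = c}
        = f '' {j : ℕ | m j = c} := by
      ext z
      simp only [Set.mem_setOf_eq, Set.mem_image]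
      constructor
      · intro hz
        obtain ⟨j, rfl⟩ := hfs z
        exact ⟨j, hz, rfl⟩
      · rintro ⟨j, hj, rfl⟩; exact hj
    have h3 : {j : ℕ | m j = c} = ↑((range M).filter (fun j => m j = c)) := by
      ext j
      simp only [Set.mem_setOf_eq, Finset.coe_filter, Finset.mem_range, Set.mem_setOf_eq]
      constructor
      · intro hj
        refine ⟨?_, hj⟩
        by_contra hcon
        push_neg at hcon
        have := hmz j hcon
        omega
      · rintro ⟨_, hj⟩; exact hj
    have h4 := hqmult c hc
    rw [h2, Set.ncard_image_of_injective _ hfi, h3, Set.ncard_coe_finset] at h4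
    omega
  -- threshold counts agree
  have hcount : ∀ t, 1 ≤ t →
      ((range M).filter (fun j => t ≤ q j)).card = ((range M).filter (fun j => t ≤ m j)).card := by
    intro t ht
    rw [threshold_count q M n t hq0n, threshold_count m M n t hmn]
    exact Finset.sum_congr rfl fun c hc => hvalcount c (le_trans ht (Finset.mem_Icc.mp hc).1)
  -- sums of squares
  have hsumw : ∑ i, (w i) ^ 2 = ∑ j ∈ range M, (q j : ℝ) * (ε + (f j : ℝ)) ^ 2 := by
    rw [sum_sq_group ε f hfi w idxw hidxw n hMw]
    have hext : ∑ j ∈ range n, (multR w (ε + (f j : ℝ)) : ℝ) * (ε + (f j : ℝ)) ^ 2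
        = ∑ j ∈ range M, (multR w (ε + (f j : ℝ)) : ℝ) * (ε + (f j : ℝ)) ^ 2 := by
      refine Finset.sum_subset (Finset.range_subset_range.mpr hnM) ?_
      intro j _ hj
      rw [Finset.mem_range, not_lt] at hj
      rw [hwq j, hqzero j hj]
      simp
    rw [hext]
    exact Finset.sum_congr rfl fun j _ => by rw [hwq j]
  have hsumv : ∑ i, (v i) ^ 2 = ∑ j ∈ range M, (m j : ℝ) * (ε + (f j : ℝ)) ^ 2 :=
    sum_sq_group ε f hfi v idxv hidxv M hMv
  -- conclude
  have hkey : ∑ j ∈ range M, (q j : ℝ) * (ε + (f j : ℝ)) ^ 2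
      ≤ ∑ j ∈ range M, (m j : ℝ) * (ε + (f j : ℝ)) ^ 2 :=
    key_ineq q m (fun j => (ε + (f j : ℝ)) ^ 2) M n (cost_mono ε hε₁ hε₂)
      hq0n hmn hqanti hcount
  rw [enormR, enormR]
  apply Real.sqrt_le_sqrt
  rw [hsumw, hsumv]
  exact hkey
end

section
/- For every v ∈ (ℤ≥0)ⁿ₊, one has |v_ℤ(p_ℤ(v))| ≤ |v|. -/
open Finset

/-- `IsVZ n μ₀ μ w` says that the weakly decreasing tuple `w : Fin n → ℕ` is `v_ℤ(p)` for
`p ∈ 𝒫*(2n)` with decomposition data `(μ₀; μ₁, μ₂, …)`: it has `μ₀` entries equal to `0`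
and `μ_k` entries equal to `k` for each `k ≥ 1`. -/
def IsVZ (n : ℕ) (μ₀ : ℕ) (μ : ℕ → ℕ) (w : Fin n → ℕ) : Prop :=
  Antitone w ∧ multN w 0 = μ₀ ∧ ∀ k, 1 ≤ k → multN w k = μ (k - 1)

/-- `IsPZ n v q` says that the partition `q` of `2n` is `p_ℤ(v)`: the weakly decreasing
rearrangement of `[2·m_v(0), m_v(1), m_v(1), m_v(2), m_v(2), …]`.  Equivalently, for each
positive value `c`, the multiplicity of `c` in `q` is twice the number of `k ≥ 1` with
`m_v(k) = c`, plus one if `c = 2·m_v(0)`. -/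
def IsPZ (n : ℕ) (v : Fin n → ℕ) (q : ℕ → ℕ) : Prop :=
  IsPartition (2 * n) q ∧
  ∀ c, 1 ≤ c → mult (2 * n) q c =
    2 * {k : ℕ | 1 ≤ k ∧ multN v k = c}.ncard + (if c = 2 * multN v 0 then 1 else 0)

lemma aux_sum_odd (x : ℕ) : ∑ k ∈ Finset.range x, (2*k+1) = x^2 := by
  induction x with
  | zero => simp
  | succ m ih => rw [Finset.sum_range_succ, ih]; ring

lemma aux_sum_levels {ι : Type*} (s : Finset ι) (g : ι → ℕ) (ω : ℕ → ℕ) (M : ℕ)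
    (hb : ∀ i ∈ s, g i < M) :
    ∑ i ∈ s, ∑ k ∈ Finset.range (g i), ω k
      = ∑ k ∈ Finset.range M, ω k * (s.filter (fun i => k + 1 ≤ g i)).card := by
  have h1 : ∀ i ∈ s, ∑ k ∈ Finset.range (g i), ω k
      = ∑ k ∈ Finset.range M, if k + 1 ≤ g i then ω k else 0 := by
    intro i hi
    rw [← Finset.sum_filter]
    congr 1
    ext k
    simp only [Finset.mem_filter, Finset.mem_range]
    have := hb i hi
    omega
  rw [Finset.sum_congr rfl h1, Finset.sum_comm]
  refine Finset.sum_congr rfl fun k _ => ?_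
  rw [← Finset.sum_filter, Finset.sum_const, smul_eq_mul, mul_comm]

lemma aux_card_fiber {ι : Type*} (s : Finset ι) (g : ι → ℕ) (t M : ℕ)
    (hb : ∀ i ∈ s, g i < M) :
    (s.filter (fun i => t ≤ g i)).card
      = ∑ c ∈ Finset.Ico t M, (s.filter (fun i => g i = c)).card := by
  rw [Finset.card_eq_sum_card_fiberwise (f := g) (t := Finset.Ico t M)
    (fun i hi => by simp only [Finset.mem_coe, Finset.mem_filter] at hi; simp only [Finset.mem_coe, Finset.mem_Ico];
                    exact ⟨hi.2, hb i hi.1⟩)]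
  refine Finset.sum_congr rfl fun c hc => ?_
  rw [Finset.filter_filter]
  congr 1
  apply Finset.filter_congr
  intro i hi
  simp only [Finset.mem_Ico] at hc
  constructor
  · exact fun h => h.2
  · exact fun h => ⟨by omega, h⟩

/-- For every `v ∈ (ℤ≥0)ⁿ₊`, one has `|v_ℤ(p_ℤ(v))| ≤ |v|`. -/
theorem statement12 (n : ℕ) (hn : 1 ≤ n)
    (v : Fin n → ℕ) (hv : Antitone v)
    (q : ℕ → ℕ) (hq : IsPZ n v q)
    (μ₀ : ℕ) (μ : ℕ → ℕ) (hdata : IsPStar n q μ₀ μ)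
    (w : Fin n → ℕ) (hw : IsVZ n μ₀ μ w) :
    enormN w ≤ enormN v := by
  obtain ⟨hwa, hw0, hwk⟩ := hw
  obtain ⟨hqpart, hqmult⟩ := hq
  obtain ⟨_, hμa, hμsupp, hμmult⟩ := hdata
  have hn0 : 0 < n := hn
  set f : ℕ → ℕ := fun k => multN v k with hfdef
  set M : ℕ := v ⟨0, hn0⟩ + 1 with hMdef
  have hvM : ∀ i, v i < M := by
    intro i
    have : v i ≤ v ⟨0, hn0⟩ := hv (by simp [Fin.le_def])
    omega
  have hfn : ∀ k, f k ≤ n := by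
    intro k
    calc f k ≤ Finset.univ.card := Finset.card_filter_le _ _
    _ = n := by simp
  have hf0M : ∀ k, M ≤ k → f k = 0 := by
    intro k hk
    simp only [hfdef, multN, Finset.card_eq_zero, Finset.filter_eq_empty_iff]
    intro i _
    have := hvM i
    omega
  -- the finset version of the fibre counts of `v`
  have hncard : ∀ c, 1 ≤ c → {k : ℕ | 1 ≤ k ∧ multN v k = c}.ncard
      = ((Finset.Ico 1 M).filter (fun k => f k = c)).card := by
    intro c hc
    have hset : {k : ℕ | 1 ≤ k ∧ multN v k = c}
        = ↑((Finset.Ico 1 M).filter (fun k => f k = c)) := by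
      ext k
      simp only [Set.mem_setOf_eq, Finset.coe_filter, Finset.mem_Ico]
      constructor
      · rintro ⟨h1, h2⟩
        refine ⟨⟨h1, ?_⟩, h2⟩
        by_contra hk
        have := hf0M k (by omega)
        rw [hfdef] at this
        simp only at this
        omega
      · rintro ⟨⟨h1, _⟩, h2⟩
        exact ⟨h1, h2⟩
    rw [hset, Set.ncard_coe_finset]
  -- the combined multiplicity identity
  have hcomb : ∀ c, 1 ≤ c →
      2 * ((Finset.Ico 1 M).filter (fun k => f k = c)).card
        + (if c = 2 * f 0 then 1 else 0)
      = 2 * mult n μ c + (if c = 2 * μ₀ then 1 else 0) := by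
    intro c hc
    have h1 := hqmult c hc
    have h2 := hμmult c hc
    rw [hncard c hc] at h1
    have hq0 : multN v 0 = f 0 := rfl
    rw [hq0] at h1
    omega
  have hμ₀ : μ₀ = f 0 := by
    by_contra hne
    rcases Nat.eq_zero_or_pos μ₀ with h0 | h0
    · have hf0 : 1 ≤ f 0 := by omega
      have := hcomb (2 * f 0) (by omega)
      have hne2 : ¬(2 * f 0 = 2 * μ₀) := by omega
      rw [if_pos rfl, if_neg hne2] at this
      omega
    · have := hcomb (2 * μ₀) (by omega)
      have hne2 : ¬(2 * μ₀ = 2 * f 0) := by omega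
      rw [if_neg hne2, if_pos rfl] at this
      omega
  have hkey : ∀ c, 1 ≤ c →
      mult n μ c = ((Finset.Ico 1 M).filter (fun k => f k = c)).card := by
    intro c hc
    have := hcomb c hc
    rw [hμ₀] at this
    omega
  -- bound on the values of μ
  have hμn : ∀ j, μ j ≤ n := by
    intro j
    by_contra hj
    push_neg at hj
    rcases Nat.lt_or_ge j n with hjn | hjn
    · have h1 : j ∈ (Finset.range n).filter (fun i => μ i = μ j) := by
        simp [hjn]
      have h2 : 1 ≤ mult n μ (μ j) := by
        rw [mult]
        exact Finset.card_pos.mpr ⟨j, h1⟩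
      rw [hkey (μ j) (by omega)] at h2
      have h3 : 0 < ((Finset.Ico 1 M).filter (fun k => f k = μ j)).card := by omega
      obtain ⟨k, hk⟩ := Finset.card_pos.mp h3
      simp only [Finset.mem_filter] at hk
      have := hfn k
      omega
    · have := hμsupp j hjn
      omega
  set L : ℕ := M + n + 1 with hLdef
  have hwL : ∀ i, w i ≤ n := by
    intro i
    by_contra hi
    push_neg at hi
    have h1 : 1 ≤ multN w (w i) := by
      rw [multN]
      exact Finset.card_pos.mpr ⟨i, by simp⟩
    rw [hwk (w i) (by omega)] at h1
    have := hμsupp (w i - 1) (by omega)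
    omega
  -- the global level counts agree
  have hE : ∀ c, ((Finset.Ico 1 L).filter (fun j => c + 1 ≤ f j)).card
      = ((Finset.range n).filter (fun j => c + 1 ≤ μ j)).card := by
    intro c
    rw [aux_card_fiber (Finset.Ico 1 L) f (c+1) (n+1)
      (fun j _ => by have := hfn j; omega)]
    rw [aux_card_fiber (Finset.range n) μ (c+1) (n+1)
      (fun j _ => by have := hμn j; omega)]
    refine Finset.sum_congr rfl fun c' hc' => ?_
    simp only [Finset.mem_Ico] at hc'
    have h1 : mult n μ c' = ((Finset.range n).filter (fun j => μ j = c')).card := rfl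
    have h2 : ((Finset.Ico 1 L).filter (fun k => f k = c'))
        = ((Finset.Ico 1 M).filter (fun k => f k = c')) := by
      ext k
      simp only [Finset.mem_filter, Finset.mem_Ico]
      constructor
      · rintro ⟨⟨ha, hb⟩, hc⟩
        refine ⟨⟨ha, ?_⟩, hc⟩
        by_contra hk
        have := hf0M k (by omega)
        omega
      · rintro ⟨⟨ha, hb⟩, hc⟩
        exact ⟨⟨ha, by omega⟩, hc⟩
    rw [h2, ← hkey c' (by omega), h1]
  -- main counting inequality
  have hmain : ∀ k, k ≤ M + n →
      (Finset.univ.filter (fun i => k + 1 ≤ w i)).card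
        ≤ (Finset.univ.filter (fun i => k + 1 ≤ v i)).card := by
    intro k hk
    -- express counts as tail sums
    have hCw : (Finset.univ.filter (fun i => k + 1 ≤ w i)).card
        = ∑ j ∈ Finset.Ico k (M + n), μ j := by
      rw [aux_card_fiber Finset.univ w (k+1) L (fun i _ => by have := hwL i; omega)]
      have : ∀ c ∈ Finset.Ico (k+1) L,
          (Finset.univ.filter (fun i => w i = c)).card = μ (c - 1) := by
        intro c hc
        simp only [Finset.mem_Ico] at hc
        exact hwk c (by omega)
      rw [Finset.sum_congr rfl this]
      rw [Finset.sum_Ico_eq_sum_range, Finset.sum_Ico_eq_sum_range]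
      have hcount : L - (k + 1) = M + n - k := by omega
      rw [hcount]
      refine Finset.sum_congr rfl fun i _ => ?_
      congr 1
      omega
    have hCv : (Finset.univ.filter (fun i => k + 1 ≤ v i)).card
        = ∑ j ∈ Finset.Ico (k+1) L, f j := by
      rw [aux_card_fiber Finset.univ v (k+1) L (fun i _ => by have := hvM i; omega)]
      exact Finset.sum_congr rfl fun c _ => rfl
    rw [hCw, hCv]
    -- totals are equal
    have htot : ∑ j ∈ Finset.range (M + n), μ j = ∑ j ∈ Finset.Ico 1 L, f j := by
      have l1 : ∑ j ∈ Finset.range (M + n), μ j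
          = ∑ j ∈ Finset.range (M + n), ∑ c ∈ Finset.range (μ j), 1 := by
        simp
      have l2 : ∑ j ∈ Finset.Ico 1 L, f j
          = ∑ j ∈ Finset.Ico 1 L, ∑ c ∈ Finset.range (f j), 1 := by
        simp
      rw [l1, l2,
        aux_sum_levels (Finset.range (M + n)) μ (fun _ => 1) (n+1)
          (fun j _ => by have := hμn j; omega),
        aux_sum_levels (Finset.Ico 1 L) f (fun _ => 1) (n+1)
          (fun j _ => by have := hfn j; omega)]
      refine Finset.sum_congr rfl fun c _ => ?_
      rw [hE c]
      congr 2
      ext j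
      simp only [Finset.mem_filter, Finset.mem_range]
      constructor
      · rintro ⟨h1, h2⟩
        refine ⟨?_, h2⟩
        by_contra hj
        have := hμsupp j (by omega)
        omega
      · rintro ⟨h1, h2⟩
        exact ⟨by omega, h2⟩
    -- head inequality
    have hhead : ∑ j ∈ Finset.Ico 1 (k+1), f j ≤ ∑ j ∈ Finset.range k, μ j := by
      have l1 : ∑ j ∈ Finset.Ico 1 (k+1), f j
          = ∑ j ∈ Finset.Ico 1 (k+1), ∑ c ∈ Finset.range (f j), 1 := by simp
      have l2 : ∑ j ∈ Finset.range k, μ j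
          = ∑ j ∈ Finset.range k, ∑ c ∈ Finset.range (μ j), 1 := by simp
      rw [l1, l2,
        aux_sum_levels (Finset.Ico 1 (k+1)) f (fun _ => 1) (n+1)
          (fun j _ => by have := hfn j; omega),
        aux_sum_levels (Finset.range k) μ (fun _ => 1) (n+1)
          (fun j _ => by have := hμn j; omega)]
      refine Finset.sum_le_sum fun c _ => ?_
      simp only [one_mul]
      set D : ℕ := ((Finset.range n).filter (fun j => c + 1 ≤ μ j)).card with hDdef
      have hA1 : ((Finset.Ico 1 (k+1)).filter (fun j => c + 1 ≤ f j)).card ≤ k := by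
        calc ((Finset.Ico 1 (k+1)).filter (fun j => c + 1 ≤ f j)).card
            ≤ (Finset.Ico 1 (k+1)).card := Finset.card_filter_le _ _
        _ = k := by simp
      have hA2 : ((Finset.Ico 1 (k+1)).filter (fun j => c + 1 ≤ f j)).card ≤ D := by
        rw [hDdef, ← hE c]
        apply Finset.card_le_card
        apply Finset.filter_subset_filter
        apply Finset.Ico_subset_Ico le_rfl
        omega
      have hB : min k D ≤ ((Finset.range k).filter (fun j => c + 1 ≤ μ j)).card := by
        have hsub : Finset.range (min k D) ⊆ (Finset.range k).filter (fun j => c + 1 ≤ μ j) := by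
          intro j hj
          simp only [Finset.mem_range, lt_min_iff] at hj
          simp only [Finset.mem_filter, Finset.mem_range]
          refine ⟨hj.1, ?_⟩
          by_contra hμj
          push_neg at hμj
          have hsub2 : (Finset.range n).filter (fun j' => c + 1 ≤ μ j') ⊆ Finset.range j := by
            intro j' hj'
            simp only [Finset.mem_filter, Finset.mem_range] at hj'
            simp only [Finset.mem_range]
            by_contra hjj
            push_neg at hjj
            have := hμa hjj
            omega
          have := Finset.card_le_card hsub2
          simp only [Finset.card_range] at this
          omega
        calc min k D = (Finset.range (min k D)).card := (Finset.card_range _).symm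
        _ ≤ _ := Finset.card_le_card hsub
      omega
    have hsplit1 : ∑ j ∈ Finset.range k, μ j + ∑ j ∈ Finset.Ico k (M + n), μ j
        = ∑ j ∈ Finset.range (M + n), μ j := by
      rw [Finset.range_eq_Ico, Finset.range_eq_Ico]
      exact Finset.sum_Ico_consecutive μ (by omega : 0 ≤ k) (by omega : k ≤ M + n)
    have hsplit2 : ∑ j ∈ Finset.Ico 1 (k+1), f j + ∑ j ∈ Finset.Ico (k+1) L, f j
        = ∑ j ∈ Finset.Ico 1 L, f j := by
      exact Finset.sum_Ico_consecutive _ (by omega) (by omega)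
    omega
  -- conclude
  have hsq : ∑ i, (w i)^2 ≤ ∑ i, (v i)^2 := by
    have e1 : ∑ i, (w i)^2 = ∑ i : Fin n, ∑ k ∈ Finset.range (w i), (2*k+1) := by
      refine Finset.sum_congr rfl fun i _ => (aux_sum_odd _).symm
    have e2 : ∑ i, (v i)^2 = ∑ i : Fin n, ∑ k ∈ Finset.range (v i), (2*k+1) := by
      refine Finset.sum_congr rfl fun i _ => (aux_sum_odd _).symm
    rw [e1, e2,
      aux_sum_levels Finset.univ w (fun k => 2*k+1) L (fun i _ => by have := hwL i; omega),
      aux_sum_levels Finset.univ v (fun k => 2*k+1) L (fun i _ => by have := hvM i; omega)]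
    refine Finset.sum_le_sum fun k hk => ?_
    simp only [Finset.mem_range] at hk
    exact Nat.mul_le_mul_left _ (hmain k (by omega))
  rw [enormN, enormN]
  apply Real.sqrt_le_sqrt
  have cw : ∑ i, ((w i : ℝ))^2 = ((∑ i, (w i)^2 : ℕ) : ℝ) := by push_cast; rfl
  have cv : ∑ i, ((v i : ℝ))^2 = ((∑ i, (v i)^2 : ℕ) : ℝ) := by push_cast; rfl
  rw [cw, cv]
  exact_mod_cast hsq
end

section
/- For every v ∈ (1/4+(1/2)ℤ≥0)ⁿ₊, one has |v_{1/4}(p_{1/4}(v))| ≤ |v|. -/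
open Finset

/-- `IsVQuarter n p w` says that the weakly decreasing tuple `w : Fin n → ℝ` is the tuple
having `ν_k = p (k-1)` entries equal to `(2k-1)/4` for each `k ≥ 1`, where
`p = [ν₁, ν₂, …]` is a partition of `n`. -/
def IsVQuarter (n : ℕ) (p : ℕ → ℕ) (w : Fin n → ℝ) : Prop :=
  Antitone w ∧ (∀ i, ∃ k : ℕ, 1 ≤ k ∧ w i = (2 * (k : ℝ) - 1) / 4) ∧
  ∀ k : ℕ, 1 ≤ k → multR w ((2 * (k : ℝ) - 1) / 4) = p (k - 1)

/-- `IsPQuarter n v q` says that the partition `q` of `n` is the weakly decreasing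
rearrangement of the multiplicity sequence `[m_v(1/4), m_v(3/4), m_v(5/4), …]`. -/
def IsPQuarter (n : ℕ) (v : Fin n → ℝ) (q : ℕ → ℕ) : Prop :=
  IsPartition n q ∧
  ∀ c : ℕ, 1 ≤ c →
    mult n q c = {k : ℕ | 1 ≤ k ∧ multR v ((2 * (k : ℝ) - 1) / 4) = c}.ncard


private lemma val_inj {a b : ℕ} (h : (2*(a:ℝ)-1)/4 = (2*(b:ℝ)-1)/4) : a = b := by
  have : (a:ℝ) = b := by linarith
  exact_mod_cast this

private lemma dc_eq_range (s : Finset ℕ) (h : ∀ a b : ℕ, a ≤ b → b ∈ s → a ∈ s) :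
    s = Finset.range s.card := by
  ext k
  simp only [Finset.mem_range]
  constructor
  · intro hk
    have hsub : Finset.range (k+1) ⊆ s := fun m hm =>
      h m k (Nat.lt_succ_iff.mp (Finset.mem_range.mp hm)) hk
    have := Finset.card_le_card hsub
    simpa using this
  · intro hk
    by_contra hks
    have hsub : s ⊆ Finset.range k := by
      intro m hm
      simp only [Finset.mem_range]
      by_contra hmk
      exact hks (h k m (le_of_not_gt hmk) hm)
    have := Finset.card_le_card hsub
    simp only [Finset.card_range] at this
    omega

private lemma layer_cake_s14 (g : ℕ → ℕ) (j C : ℕ) (hg : ∀ k, g k ≤ C) :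
    ∑ k ∈ Finset.range j, g k
      = ∑ c ∈ Finset.range C, ((Finset.range j).filter (fun k => c < g k)).card := by
  have h1 : ∀ k ∈ Finset.range j, g k = ∑ c ∈ Finset.range C, if c < g k then 1 else 0 := by
    intro k _
    rw [← Finset.card_filter]
    have he : (Finset.range C).filter (fun c => c < g k) = Finset.range (g k) := by
      ext c
      simp only [Finset.mem_filter, Finset.mem_range]
      have := hg k; omega
    rw [he, Finset.card_range]
  rw [Finset.sum_congr rfl h1, Finset.sum_comm]
  exact Finset.sum_congr rfl fun c _ => (Finset.card_filter _ _).symm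

private lemma count_gt_eq (g h : ℕ → ℕ) (K C : ℕ)
    (hgC : ∀ k, g k < C) (hhC : ∀ k, h k < C)
    (heq : ∀ d, 1 ≤ d → ((Finset.range K).filter (fun k => g k = d)).card
        = ((Finset.range K).filter (fun k => h k = d)).card) (c : ℕ) :
    ((Finset.range K).filter (fun k => c < g k)).card
      = ((Finset.range K).filter (fun k => c < h k)).card := by
  have gen : ∀ g : ℕ → ℕ, (∀ k, g k < C) →
      ((Finset.range K).filter (fun k => c < g k)).card
        = ∑ d ∈ (Finset.range C).filter (fun d => c < d),
            ((Finset.range K).filter (fun k => g k = d)).card := by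
    intro g hg
    rw [Finset.card_eq_sum_card_fiberwise (f := g)
      (t := (Finset.range C).filter (fun d => c < d))
      (fun k hk => by
        simp only [Finset.mem_coe, Finset.mem_filter, Finset.mem_range] at hk ⊢
        exact ⟨hg k, hk.2⟩)]
    refine Finset.sum_congr rfl fun d hd => ?_
    simp only [Finset.mem_filter, Finset.mem_range] at hd
    congr 1
    ext k
    simp only [Finset.mem_filter, Finset.mem_range]
    constructor
    · rintro ⟨⟨hk, _⟩, hgd⟩; exact ⟨hk, hgd⟩
    · rintro ⟨hk, hgd⟩; exact ⟨⟨hk, by omega⟩, hgd⟩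
  rw [gen g hgC, gen h hhC]
  refine Finset.sum_congr rfl fun d hd => ?_
  simp only [Finset.mem_filter, Finset.mem_range] at hd
  exact heq d (by omega)

private lemma abel_le (f q : ℕ → ℕ) (a : ℕ → ℝ) (K : ℕ)
    (hmono : ∀ k, a k ≤ a (k+1))
    (hps : ∀ j, j ≤ K → ∑ k ∈ Finset.range j, f k ≤ ∑ k ∈ Finset.range j, q k)
    (htot : ∑ k ∈ Finset.range K, f k = ∑ k ∈ Finset.range K, q k) :
    ∑ k ∈ Finset.range K, (q k : ℝ) * a k ≤ ∑ k ∈ Finset.range K, (f k : ℝ) * a k := by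
  have key : ∀ j, j ≤ K →
      ∑ k ∈ Finset.range j, ((q k : ℝ) * a k - (f k : ℝ) * a k)
        ≤ (((∑ k ∈ Finset.range j, q k : ℕ) : ℝ) - ((∑ k ∈ Finset.range j, f k : ℕ) : ℝ)) * a j := by
    intro j
    induction j with
    | zero => intro _; simp
    | succ m ih =>
      intro hm
      have hmK : m ≤ K := by omega
      have hD : (0:ℝ) ≤ ((∑ k ∈ Finset.range (m+1), q k : ℕ) : ℝ)
          - ((∑ k ∈ Finset.range (m+1), f k : ℕ) : ℝ) := by
        have h := hps (m+1) hm
        have h' : ((∑ k ∈ Finset.range (m+1), f k : ℕ) : ℝ)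
            ≤ ((∑ k ∈ Finset.range (m+1), q k : ℕ) : ℝ) := by exact_mod_cast h
        linarith
      calc ∑ k ∈ Finset.range (m+1), ((q k : ℝ) * a k - (f k : ℝ) * a k)
          = (∑ k ∈ Finset.range m, ((q k : ℝ) * a k - (f k : ℝ) * a k))
            + ((q m : ℝ) * a m - (f m : ℝ) * a m) := by rw [Finset.sum_range_succ]
        _ ≤ (((∑ k ∈ Finset.range m, q k : ℕ) : ℝ) - ((∑ k ∈ Finset.range m, f k : ℕ) : ℝ)) * a m
            + ((q m : ℝ) * a m - (f m : ℝ) * a m) := by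
            have := ih hmK; linarith
        _ = (((∑ k ∈ Finset.range (m+1), q k : ℕ) : ℝ)
            - ((∑ k ∈ Finset.range (m+1), f k : ℕ) : ℝ)) * a m := by
            rw [Finset.sum_range_succ, Finset.sum_range_succ]; push_cast; ring
        _ ≤ _ := mul_le_mul_of_nonneg_left (hmono m) hD
  have h0 := key K le_rfl
  rw [htot, sub_self, zero_mul, Finset.sum_sub_distrib] at h0
  linarith

private lemma multR_eq_fiber {n : ℕ} (u : Fin n → ℝ) (κ : Fin n → ℕ)
    (hval : ∀ i, u i = (2*(κ i:ℝ)-1)/4) (k : ℕ) :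
    multR u ((2*(k:ℝ)-1)/4) = (Finset.univ.filter (fun i => κ i = k)).card := by
  have hset : {i : Fin n | u i = (2*(k:ℝ)-1)/4}
      = ((Finset.univ.filter (fun i => κ i = k) : Finset (Fin n)) : Set (Fin n)) := by
    ext i
    simp only [Set.mem_setOf_eq, hval i, Finset.coe_filter, Finset.mem_univ, true_and,
      Set.mem_setOf_eq]
    exact ⟨fun h => val_inj h, fun h => by rw [h]⟩
  rw [multR, hset, Set.ncard_coe_finset]

private lemma fiber_sum {n : ℕ} (u : Fin n → ℝ) (κ : Fin n → ℕ) (K : ℕ)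
    (h1 : ∀ i, 1 ≤ κ i) (h2 : ∀ i, κ i ≤ K)
    (hval : ∀ i, u i = (2*(κ i:ℝ)-1)/4) :
    ∑ i, (u i)^2
      = ∑ k ∈ Finset.range K,
          ((Finset.univ.filter (fun i => κ i = k+1)).card : ℝ) * ((2*(k:ℝ)+1)/4)^2 := by
  rw [← Finset.sum_fiberwise_of_maps_to (g := fun i => κ i - 1) (t := Finset.range K)
      (fun i _ => Finset.mem_range.mpr (show κ i - 1 < K by have := h1 i; have := h2 i; omega))
      (fun i => (u i)^2)]
  refine Finset.sum_congr rfl fun k hk => ?_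
  have hfe : Finset.univ.filter (fun i : Fin n => κ i - 1 = k)
      = Finset.univ.filter (fun i => κ i = k+1) := by
    ext i
    simp only [Finset.mem_filter, Finset.mem_univ, true_and]
    have := h1 i; omega
  rw [hfe]
  have hc : ∀ i ∈ Finset.univ.filter (fun i : Fin n => κ i = k+1),
      (u i)^2 = ((2*(k:ℝ)+1)/4)^2 := by
    intro i hi
    simp only [Finset.mem_filter] at hi
    rw [hval i, hi.2]
    push_cast
    ring_nf
  rw [Finset.sum_congr rfl hc, Finset.sum_const, nsmul_eq_mul]

/-- For every `v ∈ (1/4+(1/2)ℤ≥0)ⁿ₊` (weakly decreasing,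
with all entries of the form `(2k-1)/4` for `k ≥ 1`), one has
`|v_{1/4}(p_{1/4}(v))| ≤ |v|`. -/
theorem statement14 (n : ℕ) (hn : 1 ≤ n)
    (v : Fin n → ℝ) (hv : Antitone v)
    (hvmem : ∀ i, ∃ k : ℕ, 1 ≤ k ∧ v i = (2 * (k : ℝ) - 1) / 4)
    (q : ℕ → ℕ) (hq : IsPQuarter n v q)
    (w : Fin n → ℝ) (hw : IsVQuarter n q w) :
    enormR w ≤ enormR v := by
  obtain ⟨⟨hqanti, hqsupp, hqsum⟩, hqmult⟩ := hq
  obtain ⟨hwanti, hwmem, hwmult⟩ := hw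
  choose κv hκv1 hκv2 using hvmem
  choose κw hκw1 hκw2 using hwmem
  -- κw is bounded by n
  have hκwn : ∀ i, κw i ≤ n := by
    intro i
    by_contra hcon
    push_neg at hcon
    have h0 : q (κw i - 1) = 0 := hqsupp _ (by omega)
    have hm := hwmult (κw i) (hκw1 i)
    have hpos : 0 < multR w ((2 * (κw i : ℝ) - 1) / 4) :=
      (Set.ncard_pos (Set.toFinite _)).mpr ⟨i, hκw2 i⟩
    omega
  set B := Finset.univ.sup κv with hB
  set K := B + n + 1 with hK
  have hκvK : ∀ i, κv i ≤ K := fun i =>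
    le_trans (Finset.le_sup (Finset.mem_univ i)) (by omega)
  have hκwK : ∀ i, κw i ≤ K := fun i => le_trans (hκwn i) (by omega)
  have hvsum : ∑ i, (v i)^2 = ∑ k ∈ Finset.range K,
      ((Finset.univ.filter (fun i => κv i = k+1)).card : ℝ) * ((2*(k:ℝ)+1)/4)^2 :=
    fiber_sum v κv K hκv1 hκvK hκv2
  have hwsum : ∑ i, (w i)^2
      = ∑ k ∈ Finset.range K, (q k : ℝ) * ((2*(k:ℝ)+1)/4)^2 := by
    rw [fiber_sum w κw K hκw1 hκwK hκw2]
    refine Finset.sum_congr rfl fun k _ => ?_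
    have h1 := multR_eq_fiber w κw hκw2 (k+1)
    have h2 := hwmult (k+1) (by omega)
    rw [← h1, h2]
    norm_num
  -- bounds on values
  have hfn : ∀ k, (Finset.univ.filter (fun i => κv i = k+1)).card ≤ n := fun k =>
    le_trans (Finset.card_filter_le _ _) (by simp)
  have hqn : ∀ k, q k ≤ n := by
    intro k
    rcases lt_or_ge k n with h | h
    · calc q k ≤ ∑ i ∈ Finset.range n, q i :=
          Finset.single_le_sum (fun i _ => Nat.zero_le _) (Finset.mem_range.mpr h)
        _ = n := hqsum
    · rw [hqsupp k h]; exact Nat.zero_le n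
  -- total sums
  have htotf : ∑ k ∈ Finset.range K, (Finset.univ.filter (fun i => κv i = k+1)).card = n := by
    have h := Finset.card_eq_sum_card_fiberwise
      (f := fun i : Fin n => κv i - 1) (s := Finset.univ) (t := Finset.range K)
      (fun i _ => Finset.mem_range.mpr (show κv i - 1 < K by
        have := hκv1 i; have := hκvK i; omega))
    rw [Finset.card_univ, Fintype.card_fin] at h
    conv_rhs => rw [h]
    refine Finset.sum_congr rfl fun k _ => ?_
    congr 1
    ext i
    simp only [Finset.mem_filter, Finset.mem_univ, true_and]
    have := hκv1 i; omega
  have htotq : ∑ k ∈ Finset.range K, q k = n := by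
    rw [← hqsum]
    symm
    apply Finset.sum_subset (Finset.range_subset_range.mpr (by omega))
    intro k _ hk
    simp only [Finset.mem_range, not_lt] at hk
    exact hqsupp k hk
  -- per-value multiplicity equality
  have hval : ∀ d, 1 ≤ d → ((Finset.range K).filter (fun k => q k = d)).card
      = ((Finset.range K).filter
          (fun k => (Finset.univ.filter (fun i => κv i = k+1)).card = d)).card := by
    intro d hd
    have hL : (Finset.range K).filter (fun k => q k = d)
        = (Finset.range n).filter (fun k => q k = d) := by
      ext k
      simp only [Finset.mem_filter, Finset.mem_range]
      constructor
      · rintro ⟨hk, hkd⟩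
        refine ⟨?_, hkd⟩
        by_contra hnk
        have := hqsupp k (by omega)
        omega
      · rintro ⟨hk, hkd⟩; exact ⟨by omega, hkd⟩
    have hR : ({k : ℕ | 1 ≤ k ∧ multR v ((2 * (k : ℝ) - 1) / 4) = d} : Set ℕ)
        = ((((Finset.range K).filter
            (fun k => (Finset.univ.filter (fun i => κv i = k+1)).card = d)).image
            (· + 1) : Finset ℕ) : Set ℕ) := by
      ext k
      simp only [Set.mem_setOf_eq, Finset.coe_image, Set.mem_image, Finset.mem_coe,
        Finset.mem_filter, Finset.mem_range]
      constructor
      · rintro ⟨hk1, hkm⟩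
        refine ⟨k - 1, ⟨?_, ?_⟩, by omega⟩
        · have hpos : ({i : Fin n | v i = (2 * (k : ℝ) - 1) / 4}).Nonempty := by
            rw [← Set.ncard_pos (Set.toFinite _)]
            show 0 < multR v ((2 * (k : ℝ) - 1) / 4)
            omega
          obtain ⟨i, hi⟩ := hpos
          have hik : κv i = k := val_inj ((hκv2 i).symm.trans hi)
          have hkB : k ≤ B := hik ▸ Finset.le_sup (Finset.mem_univ i)
          omega
        · have h1 := multR_eq_fiber v κv hκv2 (k-1+1)
          have hke : k - 1 + 1 = k := by omega
          rw [← h1, hke]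
          exact hkm
      · rintro ⟨j, ⟨hjK, hjd⟩, rfl⟩
        refine ⟨by omega, ?_⟩
        rw [multR_eq_fiber v κv hκv2 (j+1)]
        exact hjd
    rw [hL]
    have hLm : ((Finset.range n).filter (fun k => q k = d)).card = mult n q d := rfl
    rw [hLm, hqmult d hd, hR, Set.ncard_coe_finset,
      Finset.card_image_of_injective _ (add_left_injective 1)]
  -- counting of values exceeding c agrees
  have hcnt : ∀ c, ((Finset.range K).filter (fun k => c < q k)).card
      = ((Finset.range K).filter
          (fun k => c < (Finset.univ.filter (fun i => κv i = k+1)).card)).card :=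
    count_gt_eq q (fun k => (Finset.univ.filter (fun i => κv i = k+1)).card) K (n+1)
      (fun k => by have := hqn k; omega)
      (fun k => show (Finset.univ.filter (fun i => κv i = k+1)).card < n+1 by
        have := hfn k; omega) hval
  -- partial sums dominance
  have hps : ∀ j, j ≤ K →
      ∑ k ∈ Finset.range j, (Finset.univ.filter (fun i => κv i = k+1)).card
        ≤ ∑ k ∈ Finset.range j, q k := by
    intro j hj
    rw [layer_cake_s14 (fun k => (Finset.univ.filter (fun i => κv i = k+1)).card) j (n+1)
        (fun k => show (Finset.univ.filter (fun i => κv i = k+1)).card ≤ n+1 by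
          have := hfn k; omega),
      layer_cake_s14 q j (n+1) (fun k => by have := hqn k; omega)]
    refine Finset.sum_le_sum fun c _ => ?_
    have hdcq : (Finset.range K).filter (fun k => c < q k)
        = Finset.range (((Finset.range K).filter (fun k => c < q k)).card) := by
      apply dc_eq_range
      intro a b hab hb
      simp only [Finset.mem_filter, Finset.mem_range] at hb ⊢
      exact ⟨by omega, lt_of_lt_of_le hb.2 (hqanti hab)⟩
    have hlow : min (((Finset.range K).filter (fun k => c < q k)).card) j
        ≤ ((Finset.range j).filter (fun k => c < q k)).card := by
      have hsub : Finset.range (min (((Finset.range K).filter (fun k => c < q k)).card) j)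
          ⊆ (Finset.range j).filter (fun k => c < q k) := by
        intro k hk
        simp only [Finset.mem_range, lt_min_iff] at hk
        have hkmem : k ∈ (Finset.range K).filter (fun k => c < q k) := by
          rw [hdcq]
          exact Finset.mem_range.mpr hk.1
        simp only [Finset.mem_filter, Finset.mem_range] at hkmem ⊢
        exact ⟨hk.2, hkmem.2⟩
      simpa using Finset.card_le_card hsub
    have hb1 : ((Finset.range j).filter
        (fun k => c < (Finset.univ.filter (fun i => κv i = k+1)).card)).card ≤ j := by
      calc ((Finset.range j).filter
            (fun k => c < (Finset.univ.filter (fun i => κv i = k+1)).card)).card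
          ≤ (Finset.range j).card := Finset.card_filter_le _ _
        _ = j := Finset.card_range j
    have hb2 : ((Finset.range j).filter
          (fun k => c < (Finset.univ.filter (fun i => κv i = k+1)).card)).card
        ≤ ((Finset.range K).filter
          (fun k => c < (Finset.univ.filter (fun i => κv i = k+1)).card)).card :=
      Finset.card_le_card (Finset.filter_subset_filter _ (Finset.range_subset_range.mpr hj))
    have hc := hcnt c
    omega
  -- conclude by Abel summation
  rw [enormR, enormR]
  apply Real.sqrt_le_sqrt
  calc ∑ i, (w i)^2
      = ∑ k ∈ Finset.range K, (q k : ℝ) * ((2*(k:ℝ)+1)/4)^2 := hwsum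
    _ ≤ ∑ k ∈ Finset.range K,
          ((Finset.univ.filter (fun i => κv i = k+1)).card : ℝ) * ((2*(k:ℝ)+1)/4)^2 := by
        apply abel_le (fun k => (Finset.univ.filter (fun i => κv i = k+1)).card) q
          (fun k => ((2*(k:ℝ)+1)/4)^2) K
        · intro k
          have h1 : (0:ℝ) ≤ (2*(k:ℝ)+1)/4 := by positivity
          have h2 : (2*(k:ℝ)+1)/4 ≤ (2*((k+1:ℕ):ℝ)+1)/4 := by push_cast; linarith
          exact pow_le_pow_left₀ h1 h2 2
        · exact hps
        · exact htotf.trans htotq.symm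
    _ = ∑ i, (v i)^2 := hvsum.symm
end

section
/- Let q be the transpose of a partition in 𝒫**(2n), and let r = q_C be its C-collapse. Then the sequence r̃ equals q. In other words, the operation r ↦ r̃ is a left inverse to the C-collapse map on the set of transposes of partitions in 𝒫**(2n). -/
open Finset

/-- For a partition `r = [r₁, r₂, …]` (0-indexed here, so `r i` is the part `r_{i+1}`), the
sequence `r̃` is obtained by replacing each even (nonzero) part `r_{i+1}` by `r_{i+1} + 1`
if `i + 1` is odd and by `r_{i+1} - 1` if `i + 1` is even, leaving odd parts unchanged. -/
def tildeSeq (r : ℕ → ℕ) (i : ℕ) : ℕ :=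
  if r i = 0 then 0
  else if Even (r i) then (if Even i then r i + 1 else r i - 1) else r i

set_option linter.unusedSectionVars false

/-- The explicit C-collapse of a partition all of whose nonzero parts are odd. -/
def collapseQ (q : ℕ → ℕ) (i : ℕ) : ℕ :=
  if Even i then (if q i = q (i+1) then q i else q i - 1)
  else (if q (i-1) = q i then q i else q i + 1)

section Collapse

variable {N m : ℕ} {q : ℕ → ℕ}
variable (hN : Even N) (hm : Even m) (hmN : m ≤ N) (hanti : Antitone q)
  (hodd : ∀ i, i < m → Odd (q i)) (hzero : ∀ i, m ≤ i → q i = 0)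

/-- if q i ≥ 1 then i < m -/
lemma lt_m_of_pos (hzero : ∀ i, m ≤ i → q i = 0) {i : ℕ} (h : 1 ≤ q i) : i < m := by
  by_contra hc
  have := hzero i (by omega)
  omega

include hanti hodd hzero hm in
lemma gap_two {i : ℕ} (hi : Even i) (hne : q i ≠ q (i+1)) : q (i+1) + 2 ≤ q i := by
  have h1 : q (i+1) ≤ q i := hanti (by omega)
  have hpos : 1 ≤ q i := by omega
  have him : i < m := lt_m_of_pos hzero hpos
  have him1 : i + 1 < m := by
    rcases hm with ⟨a, ha⟩; rcases hi with ⟨b, hb⟩; omega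
  have o1 := hodd i him
  have o2 := hodd (i+1) him1
  rcases o1 with ⟨a, ha⟩; rcases o2 with ⟨b, hb⟩; omega

include hanti hodd hzero hm in
lemma collapseQ_pair (k : ℕ) :
    collapseQ q (2*k) + collapseQ q (2*k+1) = q (2*k) + q (2*k+1) := by
  have he : Even (2*k) := ⟨k, by omega⟩
  have ho : ¬ Even (2*k+1) := by simp [Nat.even_add_one, he]
  simp only [collapseQ, if_pos he, if_neg ho]
  have : (2*k+1) - 1 = 2*k := by omega
  rw [this]
  by_cases hc : q (2*k) = q (2*k+1)
  · simp [hc]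
  · have := gap_two hm hanti hodd hzero he hc
    simp only [if_neg hc]; omega

include hanti hodd hzero hm in
lemma collapseQ_sum_even (k : ℕ) :
    ∑ i ∈ range (2*k), collapseQ q i = ∑ i ∈ range (2*k), q i := by
  induction k with
  | zero => simp
  | succ k ih =>
    have h2 : 2*(k+1) = (2*k+1)+1 := by omega
    rw [h2, Finset.sum_range_succ, Finset.sum_range_succ,
      Finset.sum_range_succ, Finset.sum_range_succ, ih]
    have := collapseQ_pair hm hanti hodd hzero (q := q) k
    omega

include hanti hodd hzero hm in
lemma collapseQ_anti : Antitone (collapseQ q) := by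
  apply antitone_nat_of_succ_le
  intro i
  by_cases hi : Even i
  · have ho : ¬ Even (i+1) := by simp [Nat.even_add_one, hi]
    simp only [collapseQ, if_pos hi, if_neg ho, Nat.add_sub_cancel]
    by_cases hc : q i = q (i+1)
    · simp [hc]
    · have := gap_two hm hanti hodd hzero hi hc
      simp only [if_neg hc]; omega
  · have he : Even (i+1) := Nat.even_add_one.mpr hi
    have h1 : q (i+2) ≤ q (i+1) := hanti (by omega)
    simp only [collapseQ, if_neg hi, if_pos he, Nat.add_sub_cancel]
    by_cases hc : q (i-1) = q i
    · by_cases hc2 : q (i+1) = q (i+1+1)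
      · simp only [if_pos hc, if_pos hc2]; exact hanti (by omega)
      · simp only [if_pos hc, if_neg hc2]
        have := gap_two hm hanti hodd hzero he hc2
        have := hanti (show i ≤ i+1 by omega)
        omega
    · by_cases hc2 : q (i+1) = q (i+1+1)
      · simp only [if_neg hc, if_pos hc2]
        have := hanti (show i ≤ i+1 by omega); omega
      · simp only [if_neg hc, if_neg hc2]
        have := gap_two hm hanti hodd hzero he hc2
        have := hanti (show i ≤ i+1 by omega)
        omega

include hzero hmN hN in
lemma collapseQ_zero {i : ℕ} (h : N ≤ i) : collapseQ q i = 0 := by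
  by_cases hi : Even i
  · have h1 : q i = 0 := hzero i (by omega)
    have h2 : q (i+1) = 0 := hzero (i+1) (by omega)
    simp [collapseQ, hi, h1, h2]
  · have hiN : N + 1 ≤ i := by
      rcases hN with ⟨a, ha⟩
      rcases Nat.odd_iff.mp (Nat.not_even_iff_odd.mp hi) with hb
      omega
    have h1 : q i = 0 := hzero i (by omega)
    have h2 : q (i-1) = 0 := hzero (i-1) (by omega)
    simp [collapseQ, hi, h1, h2]

include hanti hodd hzero hm hN in
lemma collapseQ_sum_N (hsum : ∑ i ∈ range N, q i = N) :
    ∑ i ∈ range N, collapseQ q i = N := by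
  rcases hN with ⟨k, hk⟩
  have : N = 2*k := by omega
  subst this
  rw [collapseQ_sum_even hm hanti hodd hzero, hsum]

include hanti hodd hzero hm in
lemma collapseQ_dominated : Dominates q (collapseQ q) := by
  intro j
  rcases Nat.even_or_odd j with hj | hj
  · rcases hj with ⟨k, hk⟩
    have : j = 2*k := by omega
    subst this
    rw [collapseQ_sum_even hm hanti hodd hzero]
  · rcases hj with ⟨k, hk⟩
    subst hk
    rw [Finset.sum_range_succ, Finset.sum_range_succ,
      collapseQ_sum_even hm hanti hodd hzero]
    have he : Even (2*k) := ⟨k, by omega⟩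
    have : collapseQ q (2*k) ≤ q (2*k) := by
      simp only [collapseQ, if_pos he]
      split <;> omega
    omega

include hanti hodd hzero hm in
lemma collapseQ_odd_eq {i : ℕ} (hi : Even i) (h : Odd (collapseQ q i)) :
    q i = q (i+1) ∧ collapseQ q i = q i := by
  by_cases hc : q i = q (i+1)
  · refine ⟨hc, ?_⟩; simp [collapseQ, hi, hc]
  · exfalso
    have hg := gap_two hm hanti hodd hzero hi hc
    have him : i < m := lt_m_of_pos hzero (by omega)
    have hoq := hodd i him
    have : collapseQ q i = q i - 1 := by simp [collapseQ, hi, hc]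
    rw [this] at h
    rcases hoq with ⟨a, ha⟩; rcases h with ⟨b, hb⟩; omega

include hanti hodd hzero hm in
lemma collapseQ_odd_eq' {i : ℕ} (hi : ¬ Even i) (h : Odd (collapseQ q i)) :
    q (i-1) = q i ∧ collapseQ q i = q i := by
  by_cases hc : q (i-1) = q i
  · refine ⟨hc, ?_⟩; simp [collapseQ, hi, hc]
  · exfalso
    have hi1 : i = (i-1) + 1 := by
      rcases Nat.odd_iff.mp (Nat.not_even_iff_odd.mp hi) with hb; omega
    have hie : Even (i-1) := by
      rcases Nat.odd_iff.mp (Nat.not_even_iff_odd.mp hi) with hb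
      exact Nat.even_iff.mpr (by omega)
    have hc' : q (i-1) ≠ q ((i-1)+1) := by rw [← hi1]; exact hc
    have hg := gap_two hm hanti hodd hzero hie hc'
    rw [← hi1] at hg
    have him : i - 1 < m := lt_m_of_pos hzero (by omega)
    have him2 : i < m := by
      rcases hm with ⟨a, ha⟩
      rcases Nat.odd_iff.mp (Nat.not_even_iff_odd.mp hi) with hb
      omega
    have hoq := hodd i him2
    have : collapseQ q i = q i + 1 := by simp [collapseQ, hi, hc]
    rw [this] at h
    rcases hoq with ⟨a, ha⟩; rcases h with ⟨b, hb⟩; omega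

include hanti hodd hzero hm hN in
lemma collapseQ_typeC : TypeC N (collapseQ q) := by
  intro k hk
  unfold mult
  have hsplit := Finset.card_filter_add_card_filter_not
    (s := (range N).filter (fun i => collapseQ q i = k)) (p := fun i => Even i)
  have hcard : (((range N).filter (fun i => collapseQ q i = k)).filter (fun i => Even i)).card
      = (((range N).filter (fun i => collapseQ q i = k)).filter (fun i => ¬ Even i)).card := by
    refine Finset.card_bij' (fun i _ => i + 1) (fun j _ => j - 1) ?_ ?_ ?_ ?_
    · intro a ha
      simp only [Finset.mem_filter, Finset.mem_range] at ha
      obtain ⟨⟨haN, hak⟩, hae⟩ := ha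
      have hodd' : Odd (collapseQ q a) := by rw [hak]; exact hk
      obtain ⟨heq, hval⟩ := collapseQ_odd_eq hm hanti hodd hzero hae hodd'
      have hne : ¬ Even (a+1) := by simp [Nat.even_add_one, hae]
      have hv : collapseQ q (a+1) = k := by
        simp only [collapseQ, if_neg hne, Nat.add_sub_cancel, if_pos heq]
        rw [← heq, ← hval, hak]
      have haN' : a + 1 < N := by
        rcases hN with ⟨x, hx⟩; rcases hae with ⟨y, hy⟩; omega
      exact Finset.mem_filter.mpr ⟨Finset.mem_filter.mpr ⟨Finset.mem_range.mpr haN', hv⟩, hne⟩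
    · intro b hb
      simp only [Finset.mem_filter, Finset.mem_range] at hb
      obtain ⟨⟨hbN, hbk⟩, hbo⟩ := hb
      have hodd' : Odd (collapseQ q b) := by rw [hbk]; exact hk
      obtain ⟨heq, hval⟩ := collapseQ_odd_eq' hm hanti hodd hzero hbo hodd'
      have hb1 : b = (b-1) + 1 := by
        rcases Nat.odd_iff.mp (Nat.not_even_iff_odd.mp hbo) with h; omega
      have hbe : Even (b-1) := by
        rcases Nat.odd_iff.mp (Nat.not_even_iff_odd.mp hbo) with h
        exact Nat.even_iff.mpr (by omega)
      have hv : collapseQ q (b-1) = k := by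
        simp only [collapseQ, if_pos hbe]
        rw [show (b-1)+1 = b from hb1.symm]
        rw [if_pos heq, heq, ← hval, hbk]
      have hbN' : b - 1 < N := by omega
      exact Finset.mem_filter.mpr ⟨Finset.mem_filter.mpr ⟨Finset.mem_range.mpr hbN', hv⟩, hbe⟩
    · intro a ha; show a + 1 - 1 = a; omega
    · intro b hb
      have hbo := (Finset.mem_filter.mp hb).2
      rcases Nat.odd_iff.mp (Nat.not_even_iff_odd.mp hbo) with h
      show b - 1 + 1 = b; omega
  rw [← hsplit, hcard]
  exact Even.add_self _

end Collapse

/-- Drop lemma : a type C partition has even partial sums at strict drops. -/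
lemma typeC_even_prefix {N : ℕ} {r : ℕ → ℕ}
    (hanti : Antitone r) (hsupp : ∀ i, N ≤ i → r i = 0) (htc : TypeC N r)
    {j : ℕ} (hdrop : r (j+1) < r j) :
    Even (∑ i ∈ range (j+1), r i) := by
  have hjN : j + 1 ≤ N := by
    by_contra hc
    have := hsupp j (by omega)
    omega
  have key : ∑ i ∈ range (j+1), r i
      = ∑ v ∈ (range (j+1)).image r, ((range (j+1)).filter (fun i => r i = v)).card • v := by
    simpa using Finset.sum_comp (s := range (j+1)) (f := fun v => v) (g := r)
  rw [key]
  apply Finset.even_sum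
  intro v hv
  simp only [Finset.mem_image, Finset.mem_range] at hv
  obtain ⟨i₀, hi₀, hv₀⟩ := hv
  have hvlarge : r (j+1) < v := by
    rw [← hv₀]
    exact lt_of_lt_of_le hdrop (hanti (by omega))
  have hfib : (range (j+1)).filter (fun i => r i = v) = (range N).filter (fun i => r i = v) := by
    ext i
    simp only [Finset.mem_filter, Finset.mem_range]
    constructor
    · rintro ⟨h1, h2⟩; exact ⟨by omega, h2⟩
    · rintro ⟨h1, h2⟩
      refine ⟨?_, h2⟩
      by_contra hc
      have : r i ≤ r (j+1) := hanti (by omega)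
      omega
  rw [hfib]
  rcases Nat.even_or_odd v with hev | hov
  · rcases hev with ⟨a, ha⟩
    exact ⟨_ * a, by rw [smul_eq_mul, ha]; ring⟩
  · have := htc v hov
    unfold mult at this
    rcases this with ⟨c, hc⟩
    exact ⟨c * v, by rw [smul_eq_mul, hc]; ring⟩

lemma odd_prefix_sum {m : ℕ} {q : ℕ → ℕ} (hodd : ∀ i, i < m → Odd (q i))
    {j : ℕ} (hj : Odd j) (hjm : j ≤ m) : Odd (∑ i ∈ range j, q i) := by
  have h0 : ∀ i ∈ range j, q i = (q i - 1) + 1 := by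
    intro i hi
    simp only [Finset.mem_range] at hi
    rcases hodd i (by omega) with ⟨a, ha⟩
    omega
  rw [Finset.sum_congr rfl h0, Finset.sum_add_distrib, Finset.sum_const,
    Finset.card_range, smul_eq_mul, mul_one]
  have h2 : Even (∑ i ∈ range j, (q i - 1)) := by
    apply Finset.even_sum
    intro i hi
    simp only [Finset.mem_range] at hi
    rcases hodd i (by omega) with ⟨a, ha⟩
    exact ⟨a, by omega⟩
  exact h2.add_odd hj

section Max

variable {N m : ℕ} {q : ℕ → ℕ}
variable (hN : Even N) (hm : Even m) (hmN : m ≤ N) (hanti : Antitone q)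
  (hodd : ∀ i, i < m → Odd (q i)) (hzero : ∀ i, m ≤ i → q i = 0)

include hN hm hmN hanti hodd hzero in
lemma collapseQ_max (r' : ℕ → ℕ) (hpart : IsPartition N r') (htc : TypeC N r')
    (hdom : Dominates q r') : Dominates (collapseQ q) r' := by
  intro j
  rcases Nat.even_or_odd j with hj | hj
  · rcases hj with ⟨k, hk⟩
    have : j = 2*k := by omega
    subst this
    rw [collapseQ_sum_even hm hanti hodd hzero]
    exact hdom _
  · rcases hj with ⟨k, hk⟩
    subst hk
    rw [Finset.sum_range_succ (f := collapseQ q), Finset.sum_range_succ (f := r'),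
      collapseQ_sum_even hm hanti hodd hzero]
    have he : Even (2*k) := ⟨k, by omega⟩
    have hq1 : ∑ i ∈ range (2*k+1), q i = ∑ i ∈ range (2*k), q i + q (2*k) :=
      Finset.sum_range_succ _ _
    have hs1 : ∑ i ∈ range (2*k+1), r' i = ∑ i ∈ range (2*k), r' i + r' (2*k) :=
      Finset.sum_range_succ _ _
    have hd1 := hdom (2*k+1)
    by_cases hc : q (2*k) = q (2*k+1)
    · have hval : collapseQ q (2*k) = q (2*k) := by simp [collapseQ, he, hc]
      rw [hval]; omega
    · have hgap := gap_two hm hanti hodd hzero he hc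
      have hval : collapseQ q (2*k) = q (2*k) - 1 := by simp [collapseQ, he, hc]
      have hq2 : ∑ i ∈ range (2*k+2), q i = ∑ i ∈ range (2*k+1), q i + q (2*k+1) :=
        Finset.sum_range_succ _ _
      have hs2 : ∑ i ∈ range (2*k+2), r' i = ∑ i ∈ range (2*k+1), r' i + r' (2*k+1) :=
        Finset.sum_range_succ _ _
      have hd2k2 := hdom (2*k+2)
      have hd2k := hdom (2*k)
      rw [hval]
      by_cases hstrict : ∑ i ∈ range (2*k+1), r' i < ∑ i ∈ range (2*k+1), q i
      · omega
      · exfalso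
        have heq : ∑ i ∈ range (2*k+1), r' i = ∑ i ∈ range (2*k+1), q i := by omega
        have hdrop : r' (2*k+1) < r' (2*k) := by omega
        have heven := typeC_even_prefix hpart.1 hpart.2.1 htc hdrop
        have hoddsum : Odd (∑ i ∈ range (2*k+1), q i) := by
          apply odd_prefix_sum hodd ⟨k, by omega⟩
          have h2km : 2*k < m := lt_m_of_pos hzero (by omega)
          rcases hm with ⟨a, ha⟩; omega
        rw [heq] at heven
        rcases heven with ⟨a, ha⟩; rcases hoddsum with ⟨b, hb⟩; omega

end Max

-- tildeSeq of the collapse recovers q.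
section Tilde
variable {m : ℕ} {q : ℕ → ℕ}
variable (hm : Even m) (hanti : Antitone q)
  (hodd : ∀ i, i < m → Odd (q i)) (hzero : ∀ i, m ≤ i → q i = 0)

include hm hanti hodd hzero in
lemma tilde_collapse : ∀ i, tildeSeq (collapseQ q) i = q i := by
  intro i
  by_cases hi : Even i
  · by_cases hc : q i = q (i+1)
    · have hval : collapseQ q i = q i := by simp [collapseQ, hi, hc]
      by_cases h0 : q i = 0
      · simp [tildeSeq, hval, h0]
      · have him : i < m := lt_m_of_pos hzero (by omega)
        have ho := hodd i him
        have hne : ¬ Even (q i) := by simpa [Nat.not_even_iff_odd] using ho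
        simp [tildeSeq, hval, h0, hne]
    · have hgap := gap_two hm hanti hodd hzero hi hc
      have hval : collapseQ q i = q i - 1 := by simp [collapseQ, hi, hc]
      have him : i < m := lt_m_of_pos hzero (by omega)
      have him1 : i + 1 < m := by
        rcases hm with ⟨a, ha⟩; rcases hi with ⟨b, hb⟩; omega
      have ho := hodd i him
      have ho1 := hodd (i+1) him1
      have h1 : 1 ≤ q (i+1) := ho1.pos
      have h3 : 3 ≤ q i := by rcases ho with ⟨a, ha⟩; rcases ho1 with ⟨b, hb⟩; omega
      unfold tildeSeq
      rw [hval]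
      have h0 : ¬ (q i - 1 = 0) := by omega
      have hev : Even (q i - 1) := by rcases ho with ⟨a, ha⟩; exact ⟨a, by omega⟩
      rw [if_neg h0, if_pos hev, if_pos hi]
      omega
  · by_cases hc : q (i-1) = q i
    · have hval : collapseQ q i = q i := by simp [collapseQ, hi, hc]
      by_cases h0 : q i = 0
      · simp [tildeSeq, hval, h0]
      · have him : i < m := lt_m_of_pos hzero (by omega)
        have ho := hodd i him
        have hne : ¬ Even (q i) := by simpa [Nat.not_even_iff_odd] using ho
        simp [tildeSeq, hval, h0, hne]
    · have hval : collapseQ q i = q i + 1 := by simp [collapseQ, hi, hc]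
      have hio : Odd i := Nat.not_even_iff_odd.mp hi
      have hi1 : i = (i-1) + 1 := by rcases hio with ⟨a, ha⟩; omega
      have hie : Even (i-1) := by
        rcases hio with ⟨a, ha⟩; exact ⟨a, by omega⟩
      have hc' : q (i-1) ≠ q ((i-1)+1) := by rw [← hi1]; exact hc
      have hgap := gap_two hm hanti hodd hzero hie hc'
      rw [← hi1] at hgap
      have him1 : i - 1 < m := lt_m_of_pos hzero (by omega)
      have him : i < m := by
        rcases hm with ⟨a, ha⟩; rcases hio with ⟨b, hb⟩; omega
      have ho := hodd i him
      unfold tildeSeq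
      rw [hval]
      have h0 : ¬ (q i + 1 = 0) := by omega
      have hev : Even (q i + 1) := by rcases ho with ⟨a, ha⟩; exact ⟨a + 1, by omega⟩
      rw [if_neg h0, if_pos hev, if_neg hi]
      omega

end Tilde

section TransposeFacts

variable {N : ℕ} {p : ℕ → ℕ}

lemma part_le_N (hp : IsPartition N p) (i : ℕ) : p i ≤ N := by
  by_cases hi : i < N
  · calc p i ≤ ∑ j ∈ range N, p j :=
        Finset.single_le_sum (fun j _ => Nat.zero_le _) (Finset.mem_range.mpr hi)
    _ = N := hp.2.2
  · rw [hp.2.1 i (by omega)]; exact Nat.zero_le _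

lemma transposeP_anti : Antitone (transposeP N p) := by
  intro j j' h
  apply Finset.card_le_card
  intro i hi
  simp only [Finset.mem_filter, Finset.mem_range] at *
  exact ⟨hi.1, by omega⟩

lemma transposeP_sum (hp : IsPartition N p) :
    ∑ j ∈ range N, transposeP N p j = N := by
  unfold transposeP
  have h1 : ∀ j, ((range N).filter (fun i => j + 1 ≤ p i)).card
      = ∑ i ∈ range N, if j + 1 ≤ p i then 1 else 0 := by
    intro j; exact Finset.card_filter _ _
  rw [Finset.sum_congr rfl (fun j _ => h1 j), Finset.sum_comm]
  have h2 : ∀ i ∈ range N, (∑ j ∈ range N, if j + 1 ≤ p i then 1 else 0) = p i := by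
    intro i _
    have : ∀ j ∈ range N, (if j + 1 ≤ p i then 1 else 0) = if j < p i then 1 else 0 := by
      intro j _; split_ifs <;> omega
    rw [Finset.sum_congr rfl this]
    rw [← Finset.card_filter]
    have : (range N).filter (fun j => j < p i) = range (p i) := by
      ext j
      simp only [Finset.mem_filter, Finset.mem_range]
      constructor
      · rintro ⟨_, h⟩; exact h
      · intro h; exact ⟨lt_of_lt_of_le h (part_le_N hp i), h⟩
    rw [this, Finset.card_range]
  rw [Finset.sum_congr rfl h2, hp.2.2]

end TransposeFacts

section PStarFacts

variable {n : ℕ} {p : ℕ → ℕ} {μ₀ : ℕ} {μ : ℕ → ℕ}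
variable (hn : 1 ≤ n) (hp : IsPStar n p μ₀ μ) (hpss : μ 0 ≤ 2 * μ₀)

include hp hpss in
lemma pstar_part_le : ∀ i, p i ≤ 2 * μ₀ := by
  intro i
  by_cases h1 : 1 ≤ p i
  · have hiN : i < 2 * n := by
      by_contra hc
      have := hp.1.2.1 i (by omega)
      omega
    have hmem : i ∈ (range (2*n)).filter (fun i => p i = p i) := by
      simp [Finset.mem_range.mpr hiN]
    have hpos : 1 ≤ mult (2*n) p (p i) := by
      apply Finset.card_pos.mpr
      exact ⟨i, by simp [mult, Finset.mem_range.mpr hiN]⟩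
    have h4 := hp.2.2.2 (p i) h1
    by_cases hk : p i = 2 * μ₀
    · omega
    · rw [h4, if_neg hk] at hpos
      have hmult : 1 ≤ mult n μ (p i) := by omega
      obtain ⟨j, hj⟩ := Finset.card_pos.mp (hmult : 0 < ((range n).filter (fun j => μ j = p i)).card)
      simp only [Finset.mem_filter, Finset.mem_range] at hj
      have : μ j ≤ μ 0 := hp.2.1 (Nat.zero_le j)
      omega
  · omega

include hn hp hpss in
lemma pstar_m_le : 2 * μ₀ ≤ 2 * n := by
  by_cases h0 : μ₀ = 0
  · omega
  · have h4 := hp.2.2.2 (2 * μ₀) (by omega)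
    rw [if_pos rfl] at h4
    have hpos : 0 < mult (2*n) p (2*μ₀) := by omega
    obtain ⟨i, hi⟩ := Finset.card_pos.mp hpos
    simp only [mult, Finset.mem_filter, Finset.mem_range] at hi
    have := part_le_N hp.1 i
    omega

include hp hpss in
lemma pstar_q_zero : ∀ j, 2 * μ₀ ≤ j → transposeP (2*n) p j = 0 := by
  intro j hj
  unfold transposeP
  rw [Finset.filter_false_of_mem, Finset.card_empty]
  intro i _
  have := pstar_part_le hp hpss i
  omega

include hn hp hpss in
lemma pstar_q_odd : ∀ j, j < 2 * μ₀ → Odd (transposeP (2*n) p j) := by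
  intro j hj
  have hqval : transposeP (2*n) p j = ∑ k ∈ Finset.Icc (j+1) (2*n), mult (2*n) p k := by
    unfold transposeP
    rw [Finset.card_eq_sum_card_fiberwise (f := p) (t := Finset.Icc (j+1) (2*n))]
    · apply Finset.sum_congr rfl
      intro k hk
      simp only [Finset.mem_Icc] at hk
      congr 1
      ext i
      simp only [Finset.mem_filter, Finset.mem_range, mult]
      constructor
      · rintro ⟨⟨hiN, _⟩, h2⟩; exact ⟨hiN, h2⟩
      · rintro ⟨hiN, h2⟩; exact ⟨⟨hiN, by omega⟩, h2⟩
    · intro i hi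
      simp only [Finset.mem_coe, Finset.mem_filter, Finset.mem_range] at hi
      simp only [Finset.mem_coe, Finset.mem_Icc]
      exact ⟨hi.2, le_trans (part_le_N hp.1 i) (by omega)⟩
  rw [hqval]
  have hstep : ∀ k ∈ Finset.Icc (j+1) (2*n),
      mult (2*n) p k = 2 * mult n μ k + (if k = 2*μ₀ then 1 else 0) := by
    intro k hk
    simp only [Finset.mem_Icc] at hk
    exact hp.2.2.2 k (by omega)
  rw [Finset.sum_congr rfl hstep, Finset.sum_add_distrib, Finset.sum_ite_eq' _ (2*μ₀)]
  have hmem : 2*μ₀ ∈ Finset.Icc (j+1) (2*n) := by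
    simp only [Finset.mem_Icc]
    exact ⟨by omega, pstar_m_le hn hp hpss⟩
  rw [if_pos hmem, ← Finset.mul_sum]
  exact ⟨_, by ring⟩

end PStarFacts

theorem statement16' (n : ℕ) (hn : 1 ≤ n)
    (p : ℕ → ℕ) (μ₀ : ℕ) (μ : ℕ → ℕ)
    (hp : IsPStar n p μ₀ μ) (hpss : μ 0 ≤ 2 * μ₀)
    (r : ℕ → ℕ) (hr : IsCCollapse (2 * n) (transposeP (2 * n) p) r) :
    tildeSeq r = transposeP (2 * n) p := by
  set q := transposeP (2 * n) p with hq
  have hN : Even (2 * n) := ⟨n, by omega⟩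
  have hm : Even (2 * μ₀) := ⟨μ₀, by omega⟩
  have hmN : 2 * μ₀ ≤ 2 * n := pstar_m_le hn hp hpss
  have hanti : Antitone q := transposeP_anti
  have hodd : ∀ i, i < 2 * μ₀ → Odd (q i) := pstar_q_odd hn hp hpss
  have hzero : ∀ i, 2 * μ₀ ≤ i → q i = 0 := pstar_q_zero hp hpss
  have hsum : ∑ i ∈ range (2 * n), q i = 2 * n := transposeP_sum hp.1
  have hpartC : IsPartition (2 * n) (collapseQ q) :=
    ⟨collapseQ_anti hm hanti hodd hzero,
     fun i hi => collapseQ_zero hN hmN hzero hi,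
     collapseQ_sum_N hN hm hanti hodd hzero hsum⟩
  have htcC : TypeC (2 * n) (collapseQ q) := collapseQ_typeC hN hm hanti hodd hzero
  have hdomC : Dominates q (collapseQ q) := collapseQ_dominated hm hanti hodd hzero
  have hd1 : Dominates r (collapseQ q) := hr.2.2.2 _ hpartC htcC hdomC
  have hd2 : Dominates (collapseQ q) r :=
    collapseQ_max hN hm hmN hanti hodd hzero r hr.1 hr.2.1 hr.2.2.1
  have hsums : ∀ j, ∑ i ∈ range j, r i = ∑ i ∈ range j, collapseQ q i :=
    fun j => le_antisymm (hd2 j) (hd1 j)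
  have hpt : r = collapseQ q := by
    funext i
    have h1 := hsums i
    have h2 := hsums (i+1)
    rw [Finset.sum_range_succ, Finset.sum_range_succ] at h2
    omega
  funext i
  rw [hpt]
  exact tilde_collapse hm hanti hodd hzero i

/-- Let `q = pᵗ` be the transpose of a partition `p ∈ 𝒫**(2n)` and let
`r = q_C` be its C-collapse.  Then `r̃ = q`; i.e., the operation `r ↦ r̃` is a left inverse
to the C-collapse map on the set of transposes of partitions in `𝒫**(2n)`. -/
theorem statement16 (n : ℕ) (hn : 1 ≤ n)
    (p : ℕ → ℕ) (μ₀ : ℕ) (μ : ℕ → ℕ)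
    (hp : IsPStar n p μ₀ μ) (hpss : μ 0 ≤ 2 * μ₀)
    (r : ℕ → ℕ) (hr : IsCCollapse (2 * n) (transposeP (2 * n) p) r) :
    tildeSeq r = transposeP (2 * n) p := by
  exact statement16' n hn p μ₀ μ hp hpss r hr
end

section
/- The map p ↦ (pᵗ)_C is injective on 𝒫**(2n); that is, if p, p′ ∈ 𝒫**(2n) satisfy (pᵗ)_C = ((p′)ᵗ)_C, then p = p′. -/
open Finset

def psum (q : ℕ → ℕ) (j : ℕ) : ℕ := ∑ i ∈ Finset.range j, q i

def eps (q : ℕ → ℕ) (j : ℕ) : ℕ :=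
  if j % 2 = 1 ∧ q j < q (j - 1) then 1 else 0

def rhat (q : ℕ → ℕ) (j : ℕ) : ℕ := q j + eps q j - eps q (j + 1)

lemma eps_le_one (q : ℕ → ℕ) (j : ℕ) : eps q j ≤ 1 := by
  unfold eps; split <;> omega

lemma eps_even (q : ℕ → ℕ) (j : ℕ) (h : j % 2 = 0) : eps q j = 0 := by
  unfold eps; split
  · omega
  · rfl

lemma eps_succ_le_q (q : ℕ → ℕ) (j : ℕ) : eps q (j + 1) ≤ q j := by
  unfold eps; split
  · next h => simp at h; omega
  · omega

lemma psum_succ (q : ℕ → ℕ) (j : ℕ) : psum q (j + 1) = psum q j + q j :=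
  Finset.sum_range_succ q j

lemma psum_rhat (q : ℕ → ℕ) : ∀ j, psum (rhat q) j + eps q j = psum q j := by
  intro j
  induction j with
  | zero => simp [psum, eps]
  | succ j ih =>
      have h1 := eps_succ_le_q q j
      have h2 := eps_le_one q j
      have h3 : rhat q j + eps q (j + 1) = q j + eps q j := by
        unfold rhat; omega
      rw [psum_succ, psum_succ]
      omega

section Bundle

variable {N m : ℕ} {q : ℕ → ℕ}

lemma eps_eq_zero_of_ge (hq : Antitone q) (hz : ∀ j, m ≤ j → q j = 0)
    (hm2 : m % 2 = 0) {j : ℕ} (hj : m ≤ j) : eps q j = 0 := by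
  unfold eps; split
  · next h =>
      exfalso
      have hj1 : m ≤ j - 1 := by omega
      have := hz (j - 1) hj1
      omega
  · rfl

lemma eps_lt_m (hq : Antitone q) (hz : ∀ j, m ≤ j → q j = 0)
    (hm2 : m % 2 = 0) {j : ℕ} (h : eps q j ≠ 0) : j < m := by
  by_contra hc
  exact h (eps_eq_zero_of_ge hq hz hm2 (by omega))

lemma psum_parity (hodd : ∀ j < m, q j % 2 = 1) :
    ∀ j, j ≤ m → psum q j % 2 = j % 2 := by
  intro j
  induction j with
  | zero => simp [psum]
  | succ j ih =>
      intro hj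
      have h1 := hodd j (by omega)
      have h2 := ih (by omega)
      rw [psum_succ]
      omega

lemma rhat_eq_zero (hq : Antitone q) (hz : ∀ j, m ≤ j → q j = 0)
    (hm2 : m % 2 = 0) {j : ℕ} (hj : m ≤ j) : rhat q j = 0 := by
  unfold rhat
  rw [hz j hj, eps_eq_zero_of_ge hq hz hm2 hj]
  omega

lemma rhat_antitone (hq : Antitone q) (hodd : ∀ j < m, q j % 2 = 1)
    (hz : ∀ j, m ≤ j → q j = 0) (hm2 : m % 2 = 0) : Antitone (rhat q) := by
  apply antitone_nat_of_succ_le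
  intro j
  have hq1 : q (j + 1) ≤ q j := hq (by omega)
  have hq2 : q (j + 2) ≤ q (j + 1) := hq (by omega)
  by_cases h1 : eps q (j + 1) = 0
  · have h0 := eps_le_one q j
    have h2 := eps_le_one q (j + 2)
    unfold rhat
    omega
  · -- eps q (j+1) = 1
    have hj1m : j + 1 < m := eps_lt_m hq hz hm2 h1
    have hlt : q (j + 1) < q j ∧ (j + 1) % 2 = 1 := by
      unfold eps at h1; split at h1
      · next h => simpa using ⟨h.2, h.1⟩
      · omega
    have h0 : eps q j = 0 := eps_even q j (by omega)
    have h2 : eps q (j + 2) = 0 := eps_even q (j + 2) (by omega)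
    have ho1 : q j % 2 = 1 := hodd j (by omega)
    have ho2 : q (j + 1) % 2 = 1 := hodd (j + 1) hj1m
    have h1' := eps_le_one q (j + 1)
    unfold rhat
    omega

lemma rhat_odd_even (hq : Antitone q) (hodd : ∀ j < m, q j % 2 = 1)
    (hz : ∀ j, m ≤ j → q j = 0) (hm2 : m % 2 = 0) {j : ℕ} (hj : j % 2 = 0)
    (h : rhat q j % 2 = 1) : j + 1 < m ∧ rhat q (j + 1) = rhat q j := by
  have hjm : j < m := by
    by_contra hc
    rw [rhat_eq_zero hq hz hm2 (by omega)] at h; omega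
  have hj1m : j + 1 < m := by omega
  have h0 : eps q j = 0 := eps_even q j hj
  have ho : q j % 2 = 1 := hodd j hjm
  have h1 : eps q (j + 1) = 0 := by
    have := eps_le_one q (j + 1)
    by_contra hc
    have : eps q (j + 1) = 1 := by omega
    unfold rhat at h
    omega
  have heq' : q (j + 1) = q j := by
    have hle : q (j + 1) ≤ q j := hq (by omega)
    unfold eps at h1; split at h1
    · omega
    · next hcond =>
        simp only [not_and, not_lt] at hcond
        have := hcond (by omega)
        simp at this
        omega
  have h2 : eps q (j + 1 + 1) = 0 := eps_even q (j + 1 + 1) (by omega)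
  constructor
  · exact hj1m
  · unfold rhat
    omega

lemma rhat_odd_odd (hq : Antitone q) (hodd : ∀ j < m, q j % 2 = 1)
    (hz : ∀ j, m ≤ j → q j = 0) (hm2 : m % 2 = 0) {j : ℕ} (hj : j % 2 = 1)
    (h : rhat q j % 2 = 1) : j < m ∧ rhat q (j - 1) = rhat q j := by
  have hjm : j < m := by
    by_contra hc
    rw [rhat_eq_zero hq hz hm2 (by omega)] at h; omega
  have ho : q j % 2 = 1 := hodd j hjm
  have h1 : eps q (j + 1) = 0 := eps_even q (j + 1) (by omega)
  have h0 : eps q j = 0 := by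
    have := eps_le_one q j
    by_contra hc
    unfold rhat at h
    omega
  have heq' : q (j - 1) = q j := by
    have hle : q j ≤ q (j - 1) := hq (by omega)
    unfold eps at h0; split at h0
    · omega
    · next hcond =>
        simp only [not_and, not_lt] at hcond
        have := hcond hj
        omega
  have hj1 : 1 ≤ j := by omega
  have he1 : eps q (j - 1) = 0 := eps_even q (j - 1) (by omega)
  have he2 : eps q (j - 1 + 1) = 0 := by
    have : j - 1 + 1 = j := by omega
    rw [this]; exact h0
  refine ⟨hjm, ?_⟩
  have hrw : j - 1 + 1 = j := by omega
  unfold rhat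
  rw [hrw, heq', he1, h0, h1]

end Bundle

section Bundle2

variable {N m : ℕ} {q : ℕ → ℕ}

lemma rhat_partition (hq : Antitone q) (hodd : ∀ j < m, q j % 2 = 1)
    (hz : ∀ j, m ≤ j → q j = 0) (hm2 : m % 2 = 0) (hmN : m ≤ N)
    (hN2 : N % 2 = 0) (hsum : psum q N = N) : IsPartition N (rhat q) := by
  refine ⟨rhat_antitone hq hodd hz hm2, fun i hi => rhat_eq_zero hq hz hm2 (by omega), ?_⟩
  have h1 := psum_rhat q N
  have h2 : eps q N = 0 := eps_even q N hN2
  show psum (rhat q) N = N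
  omega

lemma rhat_dominates : Dominates q (rhat q) := by
  intro j
  have := psum_rhat q j
  show psum (rhat q) j ≤ psum q j
  omega

lemma rhat_typeC (hq : Antitone q) (hodd : ∀ j < m, q j % 2 = 1)
    (hz : ∀ j, m ≤ j → q j = 0) (hm2 : m % 2 = 0) (hmN : m ≤ N) :
    TypeC N (rhat q) := by
  intro k hk
  have hk1 : k % 2 = 1 := Nat.odd_iff.mp hk
  unfold mult
  set s := (Finset.range N).filter (fun j => rhat q j = k) with hs
  have hcard : (s.filter (fun j => j % 2 = 0)).card + (s.filter (fun j => ¬ j % 2 = 0)).card = s.card :=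
    Finset.card_filter_add_card_filter_not _
  have hbij : (s.filter (fun j => j % 2 = 0)).card = (s.filter (fun j => ¬ j % 2 = 0)).card := by
    refine Finset.card_bij' (fun j _ => j + 1) (fun j _ => j - 1) ?_ ?_ ?_ ?_
    · intro j hj
      simp only [hs, Finset.mem_filter, Finset.mem_range] at hj ⊢
      obtain ⟨⟨hjN, hjk⟩, hje⟩ := hj
      have := rhat_odd_even hq hodd hz hm2 hje (by omega)
      exact ⟨⟨by omega, by rw [this.2, hjk]⟩, by omega⟩
    · intro j hj
      simp only [hs, Finset.mem_filter, Finset.mem_range] at hj ⊢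
      obtain ⟨⟨hjN, hjk⟩, hje⟩ := hj
      have hjo : j % 2 = 1 := by omega
      have := rhat_odd_odd hq hodd hz hm2 hjo (by omega)
      exact ⟨⟨by omega, by rw [this.2, hjk]⟩, by omega⟩
    · intro j hj; rfl
    · intro j hj
      simp only [Finset.mem_filter] at hj
      show j - 1 + 1 = j
      omega
  rw [← hcard, hbij]
  exact ⟨_, rfl⟩

lemma straddle {r' : ℕ → ℕ} (hr'p : IsPartition N r') (hr'c : TypeC N r')
    {j : ℕ} (hj1 : 1 ≤ j) (hjN : j ≤ N) (hoddsum : psum r' j % 2 = 1) :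
    ∃ k, k % 2 = 1 ∧ r' (j - 1) = k ∧ r' j = k := by
  -- number of odd parts among the first j is odd
  set T := (Finset.range j).filter (fun i => r' i % 2 = 1) with hT
  have hTodd : T.card % 2 = 1 := by
    have h1 : psum r' j % 2 = (∑ i ∈ Finset.range j, r' i % 2) % 2 :=
      Finset.sum_nat_mod _ _ _
    have h2 : ∑ i ∈ Finset.range j, r' i % 2 =
        (∑ i ∈ T, r' i % 2) + ∑ i ∈ (Finset.range j).filter (fun i => ¬ r' i % 2 = 1), r' i % 2 :=
      (Finset.sum_filter_add_sum_filter_not _ _ _).symm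
    have h3 : ∑ i ∈ T, r' i % 2 = T.card := by
      rw [Finset.card_eq_sum_ones]
      apply Finset.sum_congr rfl
      intro i hi
      simp only [hT, Finset.mem_filter] at hi
      omega
    have h4 : ∑ i ∈ (Finset.range j).filter (fun i => ¬ r' i % 2 = 1), r' i % 2 = 0 := by
      apply Finset.sum_eq_zero
      intro i hi
      simp only [Finset.mem_filter] at hi
      omega
    omega
  -- find a value k with odd multiplicity among first j
  have hfib : T.card = ∑ k ∈ T.image r', (T.filter (fun i => r' i = k)).card :=
    Finset.card_eq_sum_card_fiberwise (fun x hx => Finset.mem_image_of_mem _ hx)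
  have hex : ∃ k ∈ T.image r', (T.filter (fun i => r' i = k)).card % 2 = 1 := by
    by_contra hc
    push_neg at hc
    have : (∑ k ∈ T.image r', (T.filter (fun i => r' i = k)).card) % 2 = 0 := by
      rw [Finset.sum_nat_mod]
      have : ∀ k ∈ T.image r', (T.filter (fun i => r' i = k)).card % 2 = 0 := by
        intro k hk
        have := hc k hk
        omega
      rw [Finset.sum_congr rfl this]
      simp
    omega
  obtain ⟨k, hkmem, hkodd⟩ := hex
  have hkodd' : k % 2 = 1 := by
    obtain ⟨i, hiT, hik⟩ := Finset.mem_image.mp hkmem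
    simp only [hT, Finset.mem_filter] at hiT
    omega
  have hfil : T.filter (fun i => r' i = k) = (Finset.range j).filter (fun i => r' i = k) := by
    ext i
    simp only [hT, Finset.mem_filter, Finset.mem_range]
    constructor
    · rintro ⟨⟨h1, h2⟩, h3⟩; exact ⟨h1, h3⟩
    · rintro ⟨h1, h2⟩; exact ⟨⟨h1, by omega⟩, h2⟩
  rw [hfil] at hkodd
  -- total multiplicity in range N is even
  have htot : mult N r' k % 2 = 0 := Nat.even_iff.mp (hr'c k (Nat.odd_iff.mpr hkodd'))
  have hsub : (Finset.range j).filter (fun i => r' i = k) ⊆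
      (Finset.range N).filter (fun i => r' i = k) := by
    apply Finset.filter_subset_filter
    intro x hx
    simp only [Finset.mem_range] at hx ⊢
    omega
  have hle : ((Finset.range j).filter (fun i => r' i = k)).card ≤ mult N r' k :=
    Finset.card_le_card hsub
  have hlt : ((Finset.range j).filter (fun i => r' i = k)).card < mult N r' k := by omega
  -- there is i < j with r' i = k
  have hne : ((Finset.range j).filter (fun i => r' i = k)).Nonempty := by
    rw [← Finset.card_pos]; omega
  obtain ⟨i, hi⟩ := hne
  simp only [Finset.mem_filter, Finset.mem_range] at hi
  -- there is i' with j ≤ i' < N and r' i' = k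
  have hnsub : ¬ ((Finset.range N).filter (fun i => r' i = k)) ⊆
      ((Finset.range j).filter (fun i => r' i = k)) := by
    intro h
    have := Finset.card_le_card h
    unfold mult at hlt
    omega
  obtain ⟨i', hi'mem, hi'not⟩ := Finset.not_subset.mp hnsub
  simp only [Finset.mem_filter, Finset.mem_range] at hi'mem hi'not
  have hji' : j ≤ i' := by
    by_contra hc
    exact hi'not ⟨by omega, hi'mem.2⟩
  -- conclude
  have ha1 : r' (j - 1) ≤ r' i := hr'p.1 (by omega)
  have ha2 : r' i' ≤ r' j := hr'p.1 hji'
  have ha3 : r' j ≤ r' (j - 1) := hr'p.1 (by omega)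
  exact ⟨k, hkodd', by omega, by omega⟩

lemma rhat_max (hq : Antitone q) (hodd : ∀ j < m, q j % 2 = 1)
    (hz : ∀ j, m ≤ j → q j = 0) (hm2 : m % 2 = 0) (hmN : m ≤ N)
    {r' : ℕ → ℕ} (h1 : IsPartition N r') (h2 : TypeC N r')
    (h3 : Dominates q r') : Dominates (rhat q) r' := by
  intro j
  have hd : psum r' j ≤ psum q j := h3 j
  have hpr := psum_rhat q j
  show psum r' j ≤ psum (rhat q) j
  by_cases he : eps q j = 0
  · omega
  · have hjm : j < m := eps_lt_m hq hz hm2 he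
    have hef : j % 2 = 1 ∧ q j < q (j - 1) := by
      unfold eps at he; split at he
      · next h => exact h
      · omega
    -- suffices strict
    rcases Nat.lt_or_ge (psum r' j) (psum q j) with hlt | hge
    · have := eps_le_one q j; omega
    · exfalso
      have heqs : psum r' j = psum q j := by omega
      have hpar : psum q j % 2 = 1 := by
        have := psum_parity hodd j (by omega)
        omega
      obtain ⟨j', rfl⟩ : ∃ j', j = j' + 1 := ⟨j - 1, by omega⟩
      obtain ⟨k, hk1, hk2, hk3⟩ := straddle h1 h2 (by omega : 1 ≤ j' + 1)
        (by omega : j' + 1 ≤ N) (by omega)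
      simp only [Nat.add_sub_cancel] at hk2 hef
      have e1 : psum r' (j' + 1) = psum r' j' + r' j' := psum_succ r' j'
      have e2 : psum q (j' + 1) = psum q j' + q j' := psum_succ q j'
      have e3 : psum r' (j' + 2) = psum r' (j' + 1) + r' (j' + 1) := psum_succ r' (j' + 1)
      have e4 : psum q (j' + 2) = psum q (j' + 1) + q (j' + 1) := psum_succ q (j' + 1)
      have d1 : psum r' j' ≤ psum q j' := h3 j'
      have d2 : psum r' (j' + 2) ≤ psum q (j' + 2) := h3 (j' + 2)
      omega

end Bundle2

section Assemble

lemma rhat_collapse {N m : ℕ} {q : ℕ → ℕ} (hq : Antitone q)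
    (hodd : ∀ j < m, q j % 2 = 1) (hz : ∀ j, m ≤ j → q j = 0)
    (hm2 : m % 2 = 0) (hmN : m ≤ N) (hN2 : N % 2 = 0) (hsum : psum q N = N) :
    IsCCollapse N q (rhat q) :=
  ⟨rhat_partition hq hodd hz hm2 hmN hN2 hsum,
   rhat_typeC hq hodd hz hm2 hmN,
   rhat_dominates,
   fun r' h1 h2 h3 => rhat_max hq hodd hz hm2 hmN h1 h2 h3⟩

lemma collapse_unique {N : ℕ} {q r1 r2 : ℕ → ℕ}
    (h1 : IsCCollapse N q r1) (h2 : IsCCollapse N q r2) : r1 = r2 := by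
  have d12 : Dominates r1 r2 := h1.2.2.2 r2 h2.1 h2.2.1 h2.2.2.1
  have d21 : Dominates r2 r1 := h2.2.2.2 r1 h1.1 h1.2.1 h1.2.2.1
  funext j
  have e1 : ∀ i, ∑ x ∈ Finset.range i, r1 x = ∑ x ∈ Finset.range i, r2 x :=
    fun i => le_antisymm (d21 i) (d12 i)
  have := e1 j
  have := e1 (j + 1)
  rw [Finset.sum_range_succ, Finset.sum_range_succ] at this
  omega

def decode (j c : ℕ) : ℕ :=
  if c = 0 then 0 else if c % 2 = 1 then c else if j % 2 = 0 then c + 1 else c - 1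

lemma decode_odd {j c : ℕ} (h : c % 2 = 1) : decode j c = c := by
  unfold decode
  rw [if_neg (by omega), if_pos h]

lemma decode_rhat {m : ℕ} {q : ℕ → ℕ} (hq : Antitone q)
    (hodd : ∀ j < m, q j % 2 = 1) (hz : ∀ j, m ≤ j → q j = 0)
    (hm2 : m % 2 = 0) (j : ℕ) : decode j (rhat q j) = q j := by
  by_cases hjm : m ≤ j
  · rw [rhat_eq_zero hq hz hm2 hjm, hz j hjm]
    rfl
  · push_neg at hjm
    have ho : q j % 2 = 1 := hodd j hjm
    rcases Nat.even_or_odd j with hje | hjo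
    · -- j even
      have hje' : j % 2 = 0 := Nat.even_iff.mp hje
      have h0 : eps q j = 0 := eps_even q j hje'
      have h1 := eps_le_one q (j + 1)
      by_cases he : eps q (j + 1) = 0
      · have hr : rhat q j = q j := by unfold rhat; omega
        rw [hr, decode_odd ho]
      · have hef : q (j + 1) < q j := by
          unfold eps at he; split at he
          · next h => simpa using h.2
          · omega
        have hm1 : j + 1 < m := by omega
        have ho1 : q (j + 1) % 2 = 1 := hodd (j + 1) hm1
        have hr : rhat q j = q j - 1 := by unfold rhat; omega
        rw [hr]
        unfold decode
        rw [if_neg (by omega), if_neg (by omega), if_pos hje']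
        omega
    · -- j odd
      have hjo' : j % 2 = 1 := Nat.odd_iff.mp hjo
      have h1 : eps q (j + 1) = 0 := eps_even q (j + 1) (by omega)
      have h0 := eps_le_one q j
      by_cases he : eps q j = 0
      · have hr : rhat q j = q j := by unfold rhat; omega
        rw [hr, decode_odd ho]
      · have hr : rhat q j = q j + 1 := by unfold rhat; omega
        rw [hr]
        unfold decode
        rw [if_neg (by omega), if_neg (by omega), if_neg (by omega)]
        omega

end Assemble

section Transpose

variable {N : ℕ} {p : ℕ → ℕ}

lemma part_le (hp : IsPartition N p) (hN : 1 ≤ N) : ∀ i, p i ≤ N := by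
  intro i
  have h0 : p 0 ≤ N := by
    conv_rhs => rw [← hp.2.2]
    exact Finset.single_le_sum (f := p) (fun _ _ => Nat.zero_le _)
      (Finset.mem_range.mpr hN)
  exact le_trans (hp.1 (Nat.zero_le i)) h0

lemma transpose_antitone (N : ℕ) (p : ℕ → ℕ) : Antitone (transposeP N p) := by
  intro a b hab
  apply Finset.card_le_card
  intro x hx
  simp only [Finset.mem_filter, Finset.mem_range] at hx ⊢
  omega

lemma transpose_mult_sum (hp : IsPartition N p) (hN : 1 ≤ N) (j : ℕ) :
    transposeP N p j = ∑ k ∈ Finset.Icc (j + 1) N, mult N p k := by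
  unfold transposeP mult
  rw [Finset.card_eq_sum_card_fiberwise
    (f := p) (t := Finset.Icc (j + 1) N) ?_]
  · apply Finset.sum_congr rfl
    intro k hk
    congr 1
    ext i
    simp only [Finset.mem_filter, Finset.mem_range, Finset.mem_Icc] at hk ⊢
    constructor
    · rintro ⟨⟨h1, h2⟩, h3⟩; exact ⟨h1, h3⟩
    · rintro ⟨h1, h2⟩; exact ⟨⟨h1, by omega⟩, h2⟩
  · intro x hx
    simp only [Finset.mem_coe, Finset.mem_filter, Finset.mem_range, Finset.mem_Icc] at hx ⊢
    exact ⟨hx.2, part_le hp hN x⟩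

lemma filter_le_card (hp : IsPartition N p) (hN : 1 ≤ N) (i : ℕ) :
    ((Finset.range N).filter (fun j => j + 1 ≤ p i)).card = p i := by
  have hpi : p i ≤ N := part_le hp hN i
  have : (Finset.range N).filter (fun j => j + 1 ≤ p i) = Finset.range (p i) := by
    ext j
    simp only [Finset.mem_filter, Finset.mem_range]
    omega
  rw [this, Finset.card_range]

lemma transpose_sum (hp : IsPartition N p) (hN : 1 ≤ N) :
    psum (transposeP N p) N = N := by
  unfold psum transposeP
  simp_rw [Finset.card_filter]
  rw [Finset.sum_comm]
  have h1 : ∀ i ∈ Finset.range N,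
      (∑ j ∈ Finset.range N, if j + 1 ≤ p i then 1 else 0) = p i := by
    intro i _
    rw [← Finset.card_filter]
    exact filter_le_card hp hN i
  rw [Finset.sum_congr rfl h1, hp.2.2]

lemma transpose_transpose (hp : IsPartition N p) (hN : 1 ≤ N) {i : ℕ} (hi : i < N) :
    p i = ((Finset.range N).filter (fun j => i + 1 ≤ transposeP N p j)).card := by
  have key : ∀ j, (j + 1 ≤ p i ↔ i + 1 ≤ transposeP N p j) := by
    intro j
    constructor
    · intro h
      have sub : Finset.range (i + 1) ⊆ (Finset.range N).filter (fun i' => j + 1 ≤ p i') := by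
        intro x hx
        simp only [Finset.mem_range, Finset.mem_filter] at hx ⊢
        exact ⟨by omega, le_trans h (hp.1 (by omega : x ≤ i))⟩
      have := Finset.card_le_card sub
      rw [Finset.card_range] at this
      exact this
    · intro h
      by_contra hc
      push_neg at hc
      have sub : (Finset.range N).filter (fun i' => j + 1 ≤ p i') ⊆ Finset.range i := by
        intro x hx
        simp only [Finset.mem_range, Finset.mem_filter] at hx ⊢
        by_contra hxc
        have : p x ≤ p i := hp.1 (by omega : i ≤ x)
        omega
      have := Finset.card_le_card sub
      rw [Finset.card_range] at this
      unfold transposeP at h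
      omega
  have hfe : (Finset.range N).filter (fun j => i + 1 ≤ transposeP N p j)
      = (Finset.range N).filter (fun j => j + 1 ≤ p i) :=
    Finset.filter_congr (fun x _ => (key x).symm)
  rw [hfe, filter_le_card hp hN i]

end Transpose

section PStar

lemma pstar_bundle {n : ℕ} {p : ℕ → ℕ} {μ₀ : ℕ} {μ : ℕ → ℕ}
    (hn : 1 ≤ n) (hp : IsPStar n p μ₀ μ) (hss : μ 0 ≤ 2 * μ₀) :
    (∀ j < 2 * μ₀, transposeP (2 * n) p j % 2 = 1) ∧
    (∀ j, 2 * μ₀ ≤ j → transposeP (2 * n) p j = 0) ∧ 2 * μ₀ ≤ 2 * n := by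
  obtain ⟨hpp, hμa, hμz, hmult⟩ := hp
  have hN : 1 ≤ 2 * n := by omega
  have hform : ∀ j, transposeP (2 * n) p j =
      2 * (∑ k ∈ Finset.Icc (j + 1) (2 * n), mult n μ k) +
      (if 2 * μ₀ ∈ Finset.Icc (j + 1) (2 * n) then 1 else 0) := by
    intro j
    rw [transpose_mult_sum hpp hN j]
    have : ∀ k ∈ Finset.Icc (j + 1) (2 * n),
        mult (2 * n) p k = 2 * mult n μ k + (if k = 2 * μ₀ then 1 else 0) := by
      intro k hk
      simp only [Finset.mem_Icc] at hk
      exact hmult k (by omega)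
    rw [Finset.sum_congr rfl this, Finset.sum_add_distrib, ← Finset.mul_sum,
      Finset.sum_ite_eq' (Finset.Icc (j + 1) (2 * n)) (2 * μ₀) (fun _ => 1)]
  have hmN : 2 * μ₀ ≤ 2 * n := by
    by_cases h0 : μ₀ = 0
    · omega
    · have h1 := hmult (2 * μ₀) (by omega)
      have h2 : 1 ≤ mult (2 * n) p (2 * μ₀) := by
        rw [h1]; simp
      have h3 : ∃ i ∈ Finset.range (2 * n), p i = 2 * μ₀ := by
        have hne : ((Finset.range (2 * n)).filter (fun i => p i = 2 * μ₀)).Nonempty := by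
          rw [← Finset.card_pos]
          exact h2
        obtain ⟨i, hi⟩ := hne
        simp only [Finset.mem_filter] at hi
        exact ⟨i, hi.1, hi.2⟩
      obtain ⟨i, _, hieq⟩ := h3
      have := part_le hpp hN i
      omega
  refine ⟨?_, ?_, hmN⟩
  · intro j hj
    rw [hform j]
    have : 2 * μ₀ ∈ Finset.Icc (j + 1) (2 * n) := by
      simp only [Finset.mem_Icc]
      omega
    rw [if_pos this]
    omega
  · intro j hj
    rw [hform j]
    have h1 : 2 * μ₀ ∉ Finset.Icc (j + 1) (2 * n) := by
      simp only [Finset.mem_Icc]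
      omega
    rw [if_neg h1]
    have h2 : ∀ k ∈ Finset.Icc (j + 1) (2 * n), mult n μ k = 0 := by
      intro k hk
      simp only [Finset.mem_Icc] at hk
      unfold mult
      rw [Finset.card_eq_zero, Finset.filter_eq_empty_iff]
      intro i _
      have : μ i ≤ μ 0 := hμa (Nat.zero_le i)
      omega
    rw [Finset.sum_congr rfl h2]
    simp

end PStar

/-- The map `p ↦ (pᵗ)_C` is injective on `𝒫**(2n)`: if
`p, p′ ∈ 𝒫**(2n)` satisfy `(pᵗ)_C = ((p′)ᵗ)_C`, then `p = p′`. -/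
theorem statement17 (n : ℕ) (hn : 1 ≤ n)
    (p p' : ℕ → ℕ) (μ₀ μ₀' : ℕ) (μ μ' : ℕ → ℕ)
    (hp : IsPStar n p μ₀ μ) (hpss : μ 0 ≤ 2 * μ₀)
    (hp' : IsPStar n p' μ₀' μ') (hpss' : μ' 0 ≤ 2 * μ₀')
    (r r' : ℕ → ℕ)
    (hr : IsCCollapse (2 * n) (transposeP (2 * n) p) r)
    (hr' : IsCCollapse (2 * n) (transposeP (2 * n) p') r')
    (heq : r = r') :
    p = p' := by
  set N := 2 * n with hN
  set q := transposeP N p with hqdef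
  set q' := transposeP N p' with hq'def
  have hN1 : 1 ≤ N := by omega
  have hN2 : N % 2 = 0 := by omega
  obtain ⟨hodd, hz, hmN⟩ := pstar_bundle hn hp hpss
  obtain ⟨hodd', hz', hmN'⟩ := pstar_bundle hn hp' hpss'
  have hqa : Antitone q := transpose_antitone N p
  have hqa' : Antitone q' := transpose_antitone N p'
  have hqs : psum q N = N := transpose_sum hp.1 hN1
  have hqs' : psum q' N = N := transpose_sum hp'.1 hN1
  have hm2 : (2 * μ₀) % 2 = 0 := by omega
  have hm2' : (2 * μ₀') % 2 = 0 := by omega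
  have hcol : IsCCollapse N q (rhat q) :=
    rhat_collapse hqa hodd hz hm2 hmN hN2 hqs
  have hcol' : IsCCollapse N q' (rhat q') :=
    rhat_collapse hqa' hodd' hz' hm2' hmN' hN2 hqs'
  have hre : r = rhat q := collapse_unique hr hcol
  have hre' : r' = rhat q' := collapse_unique hr' hcol'
  have hrr : rhat q = rhat q' := by rw [← hre, ← hre', heq]
  have hqq : q = q' := by
    funext j
    rw [← decode_rhat hqa hodd hz hm2 j, ← decode_rhat hqa' hodd' hz' hm2' j, hrr]
  funext i
  by_cases hi : i < N
  · rw [transpose_transpose hp.1 hN1 hi, transpose_transpose hp'.1 hN1 hi, ← hqdef, ← hq'def, hqq]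
  · rw [hp.1.2.1 i (by omega), hp'.1.2.1 i (by omega)]
end
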